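/- arXiv:1910.14541 — 5 statements merged into one kernel-verified Lean document; each statement's English description precedes it below -/
import Mathlib

section
/- Let k be a field. The polynomial ring k[t_1,...,t_ℓ] is a free module of rank ℓ! over its subring k[c_1,...,c_ℓ] generated by the elementary symmetric polynomials. -/
set_option maxHeartbeats 2000000
set_option synthInstance.maxHeartbeats 1000000

open MvPolynomial Finset

namespace FreeSym

variable (k : Type*) [Field k] (n : ℕ)

noncomputable section

abbrev A : Subalgebra k (MvPolynomial (Fin n) k) :=
  Algebra.adjoin k (Set.range fun i : Fin n => esymm (Fin n) k ((i : ℕ) + 1))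

/-- variables with index ≥ j -/
def Sd (j : ℕ) : Finset (Fin n) := {i : Fin n | j ≤ i.val}

/-- elementary symmetric polynomial in the variables with index ≥ j -/
def E (j s : ℕ) : MvPolynomial (Fin n) k :=
  ∑ T ∈ (Sd n j).powersetCard s, ∏ i ∈ T, X i

lemma card_Sd (j : ℕ) : (Sd n j).card = n - j := by
  rw [show n - j = (Finset.range (n - j)).card from (Finset.card_range _).symm]
  refine Finset.card_bij' (fun i _ => i.val - j) (fun m hm => ⟨j + m, by
    simp only [Finset.mem_range] at hm; omega⟩) ?_ ?_ ?_ ?_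
  · intro i hi
    simp only [Sd, Finset.mem_filter] at hi
    simp only [Finset.mem_range]
    omega
  · intro m hm
    simp only [Sd, Finset.mem_filter, Finset.mem_univ, true_and]
    omega
  · intro i hi
    simp only [Sd, Finset.mem_filter] at hi
    simp only [Fin.ext_iff]
    omega
  · intro m hm
    simp only [Finset.mem_range] at hm
    simp only [Fin.val_mk]
    omega

lemma E_zero (j : ℕ) : E k n j 0 = 1 := by simp [E]

lemma E_eq_zero {j s : ℕ} (h : n - j < s) : E k n j s = 0 := by
  rw [E, Finset.powersetCard_eq_empty.2 (by rw [card_Sd]; exact h), Finset.sum_empty]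

lemma Sd_zero : Sd n 0 = Finset.univ := by
  simp [Sd]

lemma E_zero_left (s : ℕ) : E k n 0 s = esymm (Fin n) k s := by
  rw [E, Sd_zero, esymm]

lemma esymm_eq_zero {s : ℕ} (h : n < s) : esymm (Fin n) k s = 0 := by
  rw [esymm, Finset.powersetCard_eq_empty.2 (by simpa using h), Finset.sum_empty]

lemma esymm_mem_A (s : ℕ) : esymm (Fin n) k s ∈ A k n := by
  rcases s with _ | s
  · simp only [esymm_zero]; exact one_mem _
  · rcases le_or_gt (s + 1) n with h | h
    · exact Algebra.subset_adjoin ⟨⟨s, h⟩, rfl⟩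
    · rw [esymm_eq_zero k n h]; exact zero_mem _

lemma Sd_insert {j : ℕ} (hj : j < n) : Sd n j = insert ⟨j, hj⟩ (Sd n (j + 1)) := by
  ext i
  simp only [Sd, Finset.mem_insert, Finset.mem_filter, Finset.mem_univ, true_and, Fin.ext_iff]
  omega

lemma E_rec {j : ℕ} (hj : j < n) (s : ℕ) :
    E k n j (s + 1) = E k n (j + 1) (s + 1) + X ⟨j, hj⟩ * E k n (j + 1) s := by
  have hmem : (⟨j, hj⟩ : Fin n) ∉ Sd n (j + 1) := by simp [Sd]
  rw [E, Sd_insert n hj, Finset.powersetCard_succ_insert hmem, Finset.sum_union, E, E,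
    Finset.sum_image, Finset.mul_sum]
  · congr 1
    refine Finset.sum_congr rfl fun T hT => ?_
    rw [Finset.prod_insert fun hc => hmem (Finset.mem_of_subset (Finset.mem_powersetCard.1 hT).1 hc)]
  · intro T hT U hU h
    have hT' : (⟨j, hj⟩ : Fin n) ∉ T := fun hc => hmem (Finset.mem_of_subset (Finset.mem_powersetCard.1 hT).1 hc)
    have hU' : (⟨j, hj⟩ : Fin n) ∉ U := fun hc => hmem (Finset.mem_of_subset (Finset.mem_powersetCard.1 hU).1 hc)
    rw [← Finset.erase_insert hT', ← Finset.erase_insert hU', h]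
  · rw [Finset.disjoint_left]
    intro V hV hV'
    obtain ⟨T, hT, rfl⟩ := Finset.mem_image.1 hV'
    exact hmem (Finset.mem_of_subset (Finset.mem_powersetCard.1 hV).1 (Finset.mem_insert_self _ _))

/-- monomials supported on indices < j, as an A-submodule -/
def N (j : ℕ) : Submodule (A k n) (MvPolynomial (Fin n) k) :=
  Submodule.span (A k n)
    {p | ∃ b : Fin n →₀ ℕ, (∀ i : Fin n, j ≤ i.val → b i = 0) ∧ p = monomial b 1}

lemma one_mem_N (j : ℕ) : (1 : MvPolynomial (Fin n) k) ∈ N k n j :=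
  Submodule.subset_span ⟨0, fun _ _ => rfl, by simp⟩

lemma N_mono {j j' : ℕ} (h : j ≤ j') : N k n j ≤ N k n j' := by
  refine Submodule.span_mono ?_
  rintro p ⟨b, hb, rfl⟩
  exact ⟨b, fun i hi => hb i (le_trans h hi), rfl⟩

lemma A_mul_mem {r x : MvPolynomial (Fin n) k} {W : Submodule (A k n) (MvPolynomial (Fin n) k)}
    (hr : r ∈ A k n) (hx : x ∈ W) : r * x ∈ W := by
  have : (⟨r, hr⟩ : A k n) • x ∈ W := W.smul_mem _ hx
  rwa [Algebra.smul_def] at this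

lemma X_mul_mem_N {j : ℕ} {i : Fin n} (hij : i.val < j) {p : MvPolynomial (Fin n) k}
    (hp : p ∈ N k n j) : X i * p ∈ N k n j := by
  refine Submodule.span_induction ?_ ?_ ?_ ?_ hp
  · rintro p ⟨b, hb, rfl⟩
    refine Submodule.subset_span ⟨b + Finsupp.single i 1, fun i' hi' => ?_, ?_⟩
    · rw [Finsupp.add_apply, hb i' hi', Finsupp.single_apply, if_neg, add_zero]
      rintro rfl; omega
    · rw [X, monomial_mul, one_mul, add_comm]
  · simp
  · intro x y _ _ hx hy
    rw [mul_add]; exact add_mem hx hy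
  · intro a x _ hx
    rw [Algebra.smul_def]
    rw [show (algebraMap (A k n) (MvPolynomial (Fin n) k)) a * x = (a : MvPolynomial (Fin n) k) * x from rfl]
    rw [mul_left_comm, ← show (algebraMap (A k n) (MvPolynomial (Fin n) k)) a * (X i * x) = (a : MvPolynomial (Fin n) k) * (X i * x) from rfl, ← Algebra.smul_def]
    exact Submodule.smul_mem _ _ hx

lemma E_mem_N : ∀ s j : ℕ, E k n j s ∈ N k n j := by
  intro s
  induction s with
  | zero => intro j; rw [E_zero]; exact one_mem_N k n j
  | succ s ihs =>
    intro j
    induction j with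
    | zero =>
      rw [E_zero_left]
      have : esymm (Fin n) k (s + 1) = esymm (Fin n) k (s + 1) * 1 := (mul_one _).symm
      rw [this]
      exact A_mul_mem k n (esymm_mem_A k n (s + 1)) (one_mem_N k n 0)
    | succ j ihj =>
      rcases le_or_gt n j with h | hj
      · rw [E_eq_zero k n (by omega)]; exact zero_mem _
      · have hrec := E_rec k n hj s
        have : E k n (j + 1) (s + 1) = E k n j (s + 1) - X ⟨j, hj⟩ * E k n (j + 1) s := by
          rw [hrec]; ring
        rw [this]
        exact sub_mem (N_mono k n (Nat.le_succ j) ihj)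
          (X_mul_mem_N k n (by simp) (ihs (j + 1)))

lemma CH_aux (j : Fin n) :
    (0 : MvPolynomial (Fin n) k) =
      ∑ s ∈ Finset.range (n - j.val + 1),
        (-1) ^ s * E k n j.val s * (X j) ^ (n - j.val - s) := by
  set Ms : Multiset (MvPolynomial (Fin n) k) :=
    (Sd n j.val).val.map (fun i => (X i : MvPolynomial (Fin n) k)) with hMs
  have hcard : Multiset.card Ms = n - j.val := by
    rw [hMs, Multiset.card_map, ← card_Sd n j.val]; rfl
  have h := congrArg (Polynomial.eval (X j : MvPolynomial (Fin n) k))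
    (Multiset.prod_X_sub_X_eq_sum_esymm Ms)
  rw [Polynomial.eval_multiset_prod, Multiset.map_map] at h
  have hzero : ((Ms.map (Polynomial.eval (X j) ∘ fun t => Polynomial.X - Polynomial.C t)).prod)
      = 0 := by
    refine Multiset.prod_eq_zero ?_
    have hj : (X j : MvPolynomial (Fin n) k) ∈ Ms := by
      rw [hMs]
      refine Multiset.mem_map.2 ⟨j, ?_, rfl⟩
      have : j ∈ Sd n j.val := by simp [Sd]
      exact this
    refine Multiset.mem_map.2 ⟨X j, hj, ?_⟩
    simp
  rw [hzero] at h
  rw [h, Polynomial.eval_finset_sum, hcard]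
  refine Finset.sum_congr rfl fun s hs => ?_
  rw [Polynomial.eval_mul, Polynomial.eval_mul, Polynomial.eval_pow, Polynomial.eval_pow,
    Polynomial.eval_neg, Polynomial.eval_one, Polynomial.eval_C, Polynomial.eval_X]
  rw [hMs, Finset.esymm_map_val]
  rw [show (((Sd n (j : ℕ)).powersetCard s).sum fun t => t.prod X) = E k n (j : ℕ) s from rfl]
  ring

lemma X_pow_eq (j : Fin n) :
    (X j : MvPolynomial (Fin n) k) ^ (n - j.val) =
      ∑ s ∈ Finset.range (n - j.val),
        (-1) ^ s * E k n j.val (s + 1) * (X j) ^ (n - j.val - (s + 1)) := by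
  have h := CH_aux k n j
  rw [Finset.sum_range_succ'] at h
  simp only [pow_zero, one_mul, E_zero, Nat.sub_zero] at h
  have h2 : (X j : MvPolynomial (Fin n) k) ^ (n - j.val)
      = - ∑ s ∈ Finset.range (n - j.val),
          (-1) ^ (s + 1) * E k n j.val (s + 1) * (X j) ^ (n - j.val - (s + 1)) := by
    rw [eq_neg_iff_add_eq_zero, add_comm]
    exact h.symm
  rw [h2, ← Finset.sum_neg_distrib]
  refine Finset.sum_congr rfl fun s hs => ?_
  ring

/-- the index type of the basis: `a j < n - j` -/
abbrev D := (j : Fin n) → Fin (n - j.val)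

def bas (a : D n) : MvPolynomial (Fin n) k := ∏ j, X j ^ (a j : ℕ)

def M : Submodule (A k n) (MvPolynomial (Fin n) k) :=
  Submodule.span (A k n) (Set.range (bas k n))

lemma monomial_one_eq (b : Fin n →₀ ℕ) : (monomial b) (1 : k) = ∏ j, X j ^ b j := by
  rw [monomial_eq, Finsupp.prod, map_one, one_mul]
  refine Finset.prod_subset (Finset.subset_univ _) ?_
  intro x _ hx
  rw [Finsupp.notMem_support_iff.1 hx, pow_zero]

/-- the reverse-lexicographic measure -/
def mu (b : Fin n →₀ ℕ) : Lex (Fin n →₀ ℕ) := toLex (Finsupp.equivMapDomain Fin.revPerm b)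

lemma mu_lt {b b' : Fin n →₀ ℕ} (j : Fin n) (hj : b' j < b j)
    (h : ∀ i, j < i → b' i = b i) : mu n b' < mu n b := by
  rw [mu, mu]
  refine (show Finsupp.Lex (· < ·) (· < ·) _ _ → _ from fun h => h) ?_
  rw [Finsupp.lex_def]
  refine ⟨j.rev, fun i hi => ?_, ?_⟩
  · show b' (Fin.revPerm.symm i) = b (Fin.revPerm.symm i)
    exact h _ (Fin.lt_rev_iff.1 hi)
  · show b' (Fin.revPerm.symm j.rev) < b (Fin.revPerm.symm j.rev)
    simpa using hj

lemma monomial_mem (b : Fin n →₀ ℕ) : (monomial b) (1 : k) ∈ M k n := by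
  have wf : WellFounded (fun x y : Fin n →₀ ℕ => mu n x < mu n y) :=
    InvImage.wf (mu n) (wellFounded_lt)
  induction b using wf.induction with
  | _ b IH =>
  by_cases hb : ∀ j : Fin n, b j < n - j.val
  · refine Submodule.subset_span ⟨fun j => ⟨b j, hb j⟩, ?_⟩
    rw [bas, monomial_one_eq]
  · push_neg at hb
    obtain ⟨j, hj⟩ := hb
    set d := n - j.val with hd
    have hd1 : 1 ≤ d := by have := j.isLt; omega
    set b₀ := b - Finsupp.single j d with hb₀
    have hb₀i : ∀ i, b₀ i = b i - (Finsupp.single j d) i := fun i => Finsupp.tsub_apply _ _ _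
    have hbeq : b = b₀ + Finsupp.single j d := by
      ext i
      rw [Finsupp.add_apply, hb₀i]
      rcases eq_or_ne i j with rfl | hne
      · rw [Finsupp.single_apply, if_pos rfl]; omega
      · rw [Finsupp.single_apply, if_neg (Ne.symm hne)]; omega
    have hsplit : (monomial b) (1 : k) = (monomial b₀) (1 : k) * (X j) ^ d := by
      rw [X_pow_eq_monomial, monomial_mul, one_mul, ← hbeq]
    rw [hsplit, X_pow_eq, Finset.mul_sum]
    refine Submodule.sum_mem _ fun s hs => ?_
    rw [Finset.mem_range] at hs
    have hterm : (monomial b₀) (1 : k) * ((-1) ^ s * E k n (j : ℕ) (s + 1) * (X j) ^ (d - (s + 1)))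
        = (-1) ^ s * ((monomial (b₀ + Finsupp.single j (d - (s + 1)))) (1 : k)
            * E k n (j : ℕ) (s + 1)) := by
      rw [X_pow_eq_monomial, show (monomial (b₀ + Finsupp.single j (d - (s + 1)))) (1 : k)
          = (monomial b₀) 1 * (monomial (Finsupp.single j (d - (s + 1)))) 1 from by
            rw [monomial_mul, mul_one]]
      ring
    rw [hterm]
    have hsign : ((-1 : MvPolynomial (Fin n) k) ^ s) ∈ A k n := by
      refine pow_mem (neg_mem (one_mem _)) s
    refine A_mul_mem k n hsign ?_
    -- now `monomial q 1 * E ∈ M` via span_induction over `E ∈ N j`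
    have hE := E_mem_N k n (s + 1) j.val
    refine Submodule.span_induction ?_ ?_ ?_ ?_ hE
    · rintro p ⟨c, hc, rfl⟩
      rw [monomial_mul, mul_one]
      refine IH _ (mu_lt n j ?_ ?_)
      · rw [Finsupp.add_apply, Finsupp.add_apply, hb₀i, Finsupp.single_apply, if_pos rfl,
          Finsupp.single_apply, if_pos rfl, hc j (le_refl _)]
        omega
      · intro i hij
        rw [Finsupp.add_apply, Finsupp.add_apply, hb₀i, Finsupp.single_apply,
          if_neg (by intro hji; rw [hji] at hij; exact lt_irrefl _ hij),
          Finsupp.single_apply,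
          if_neg (by intro hji; rw [hji] at hij; exact lt_irrefl _ hij),
          hc i (le_of_lt (by exact_mod_cast hij))]
        omega
    · rw [mul_zero]; exact zero_mem _
    · intro x y _ _ hx hy
      rw [mul_add]; exact add_mem hx hy
    · intro a x _ hx
      rw [Algebra.smul_def, mul_left_comm, ← Algebra.smul_def]
      exact Submodule.smul_mem _ _ hx

lemma top_le_M : ⊤ ≤ M k n := by
  intro p _
  rw [← support_sum_monomial_coeff p]
  refine Submodule.sum_mem _ fun v hv => ?_
  have : (monomial v) (coeff v p) = C (coeff v p) * (monomial v) (1 : k) := by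
    rw [C_mul_monomial, mul_one]
  rw [this]
  exact A_mul_mem k n ((A k n).algebraMap_mem _) (monomial_mem k n v)

section Independence

/-- the action of a permutation on the fraction field -/
def act (σ : Equiv.Perm (Fin n)) :
    FractionRing (MvPolynomial (Fin n) k) ≃+* FractionRing (MvPolynomial (Fin n) k) :=
  IsFractionRing.ringEquivOfRingEquiv (renameEquiv k σ).toRingEquiv

lemma act_algebraMap (σ : Equiv.Perm (Fin n)) (r : MvPolynomial (Fin n) k) :
    act k n σ (algebraMap _ _ r) = algebraMap _ _ (rename σ r) := by
  rw [act, IsFractionRing.ringEquivOfRingEquiv_algebraMap]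
  rfl

lemma act_one : act k n 1 = RingEquiv.refl _ := by
  have h : (act k n 1).toRingHom = RingHom.id _ := by
    refine IsLocalization.ringHom_ext (nonZeroDivisors (MvPolynomial (Fin n) k))
      (RingHom.ext fun r => ?_)
    simp only [RingHom.coe_comp, Function.comp_apply, RingEquiv.toRingHom_eq_coe,
      RingHom.coe_coe, RingHom.id_apply]
    rw [act_algebraMap]
    rw [Equiv.Perm.coe_one, rename_id, AlgHom.id_apply]
  ext x
  exact RingHom.congr_fun h x

lemma act_mul (σ τ : Equiv.Perm (Fin n)) :
    act k n (σ * τ) = (act k n τ).trans (act k n σ) := by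
  have h : (act k n (σ * τ)).toRingHom
      = ((act k n σ).toRingHom).comp (act k n τ).toRingHom := by
    refine IsLocalization.ringHom_ext (nonZeroDivisors (MvPolynomial (Fin n) k))
      (RingHom.ext fun r => ?_)
    simp only [RingHom.coe_comp, Function.comp_apply, RingEquiv.toRingHom_eq_coe,
      RingHom.coe_coe]
    rw [act_algebraMap, act_algebraMap, act_algebraMap, rename_rename]
    rw [Equiv.Perm.coe_mul]
  ext x
  exact RingHom.congr_fun h x

set_option synthInstance.maxHeartbeats 1000000 in
set_option maxHeartbeats 1000000 in
instance : MulSemiringAction (Equiv.Perm (Fin n)) (FractionRing (MvPolynomial (Fin n) k)) where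
  smul σ x := act k n σ x
  one_smul x := by show act k n 1 x = x; rw [act_one]; rfl
  mul_smul σ τ x := by show act k n (σ * τ) x = act k n σ (act k n τ x); rw [act_mul]; rfl
  smul_zero σ := map_zero (act k n σ)
  smul_add σ x y := map_add (act k n σ) x y
  smul_one σ := map_one (act k n σ)
  smul_mul σ x y := map_mul (act k n σ) x y

lemma smul_def' (σ : Equiv.Perm (Fin n)) (x : FractionRing (MvPolynomial (Fin n) k)) :
    σ • x = act k n σ x := rfl

instance : FaithfulSMul (Equiv.Perm (Fin n)) (FractionRing (MvPolynomial (Fin n) k)) where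
  eq_of_smul_eq_smul {σ τ} h := by
    ext i
    have h2 := h (algebraMap _ _ (X i : MvPolynomial (Fin n) k))
    rw [smul_def', smul_def', act_algebraMap, act_algebraMap, rename_X, rename_X] at h2
    have h3 := IsFractionRing.injective (MvPolynomial (Fin n) k)
      (FractionRing (MvPolynomial (Fin n) k)) h2
    exact congrArg Fin.val (X_injective h3)

lemma mem_L_of_mem_A {r : MvPolynomial (Fin n) k} (hr : r ∈ A k n) :
    algebraMap (MvPolynomial (Fin n) k) (FractionRing (MvPolynomial (Fin n) k)) r ∈
      FixedPoints.subfield (Equiv.Perm (Fin n)) (FractionRing (MvPolynomial (Fin n) k)) := by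
  have hsym : r ∈ symmetricSubalgebra (Fin n) k := by
    refine Algebra.adjoin_le ?_ hr
    rintro _ ⟨i, rfl⟩
    exact esymm_isSymmetric _ _ _
  intro σ
  rw [smul_def', act_algebraMap, (mem_symmetricSubalgebra r).1 hsym σ]

abbrev Kk := FractionRing (MvPolynomial (Fin n) k)
abbrev L := FixedPoints.subfield (Equiv.Perm (Fin n)) (Kk k n)
abbrev phi : MvPolynomial (Fin n) k →+* Kk k n := algebraMap _ _

lemma L_smul (l : L k n) (y : Kk k n) : l • y = (l : Kk k n) * y := rfl

def W : Submodule (L k n) (Kk k n) :=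
  Submodule.span (L k n) (Set.range fun a : D n => phi k n (bas k n a))

lemma phi_mem_W (r : MvPolynomial (Fin n) k) : phi k n r ∈ W k n := by
  have hr : r ∈ M k n := top_le_M k n trivial
  refine Submodule.span_induction ?_ ?_ ?_ ?_ hr
  · rintro p ⟨a, rfl⟩; exact Submodule.subset_span ⟨a, rfl⟩
  · rw [map_zero]; exact zero_mem _
  · intro x y _ _ hx hy; rw [map_add]; exact add_mem hx hy
  · intro a x _ hx
    rw [Algebra.smul_def, map_mul]
    have hla : phi k n ((algebraMap (A k n) (MvPolynomial (Fin n) k)) a) ∈ L k n :=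
      mem_L_of_mem_A k n a.2
    have := (W k n).smul_mem ⟨_, hla⟩ hx
    rwa [L_smul] at this

lemma mul_mem_W (r : MvPolynomial (Fin n) k) {w : Kk k n} (hw : w ∈ W k n) :
    phi k n r * w ∈ W k n := by
  refine Submodule.span_induction ?_ ?_ ?_ ?_ hw
  · rintro p ⟨a, rfl⟩
    rw [← map_mul]
    exact phi_mem_W k n _
  · rw [mul_zero]; exact zero_mem _
  · intro x y _ _ hx hy; rw [mul_add]; exact add_mem hx hy
  · intro l x _ hx
    rw [L_smul, mul_left_comm, ← L_smul]
    exact Submodule.smul_mem _ _ hx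

lemma top_le_W : ⊤ ≤ W k n := by
  intro x _
  obtain ⟨r, s, hs, rfl⟩ := IsFractionRing.div_surjective (A := MvPolynomial (Fin n) k) x
  have hφs : phi k n s ≠ 0 := by
    rw [Ne, map_eq_zero_iff _ (IsFractionRing.injective _ _)]
    exact nonZeroDivisors.ne_zero hs
  have h1W : (1 : Kk k n) ∈ W k n := by rw [← map_one (phi k n)]; exact phi_mem_W k n 1
  let T : W k n →ₗ[L k n] W k n := (LinearMap.mulLeft (L k n) (phi k n s)).restrict
      (fun w hw => mul_mem_W k n s hw)
  have hinj : Function.Injective T := by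
    intro x y hxy
    have hxy' : phi k n s * (x : Kk k n) = phi k n s * (y : Kk k n) :=
      congrArg Subtype.val hxy
    exact Subtype.ext (mul_left_cancel₀ hφs hxy')
  have hsurj := (LinearMap.injective_iff_surjective).1 hinj
  obtain ⟨w, hw⟩ := hsurj ⟨1, h1W⟩
  have hw' : phi k n s * (w : Kk k n) = 1 := congrArg Subtype.val hw
  have hinv : (phi k n s)⁻¹ = (w : Kk k n) := inv_eq_of_mul_eq_one_right hw'
  rw [div_eq_mul_inv, hinv]
  exact mul_mem_W k n r w.2

lemma card_D : Fintype.card (D n) = Nat.factorial n := by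
  rw [Fintype.card_pi]
  simp only [Fintype.card_fin]
  rw [← Finset.prod_range fun i => n - i]
  rw [← Finset.prod_range_add_one_eq_factorial, ← Finset.prod_range_reflect (fun i => i + 1) n]
  refine Finset.prod_congr rfl fun i hi => ?_
  rw [Finset.mem_range] at hi
  omega

lemma finrank_L : Module.finrank (L k n) (Kk k n) = Nat.factorial n := by
  rw [FixedPoints.finrank_eq_card, Fintype.card_perm, Fintype.card_fin]

lemma li_L : LinearIndependent (L k n) (fun a : D n => phi k n (bas k n a)) := by
  have h2 := (basisOfTopLeSpanOfCardEqFinrank (R := L k n)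
    (fun a : D n => phi k n (bas k n a))
    (show ⊤ ≤ Submodule.span (L k n) (Set.range fun a : D n => phi k n (bas k n a)) from top_le_W k n)
    ((card_D n).trans (finrank_L k n).symm)).linearIndependent
  rwa [coe_basisOfTopLeSpanOfCardEqFinrank] at h2

lemma li_A : LinearIndependent (A k n) (bas k n) := by
  rw [linearIndependent_iff']
  intro S g hsum a ha
  have hφ : ∑ i ∈ S,
      (⟨phi k n ((g i : MvPolynomial (Fin n) k)), mem_L_of_mem_A k n (g i).2⟩ : L k n)
        • (phi k n (bas k n i)) = 0 := by
    have h0 := congrArg (phi k n) hsum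
    rw [map_sum, map_zero] at h0
    rw [← h0]
    refine Finset.sum_congr rfl fun i _ => ?_
    rw [L_smul, ← map_mul]
    congr 1
  have h1 := linearIndependent_iff'.1 (li_L k n) S _ hφ a ha
  have hval : phi k n ((g a : MvPolynomial (Fin n) k)) = 0 := congrArg Subtype.val h1
  exact Subtype.ext ((map_eq_zero_iff _ (IsFractionRing.injective _ _)).1 hval)

end Independence

end
end FreeSym

/-- `k[t_1,...,t_ℓ]` is a free module of rank `ℓ!` over its subring generated by the
elementary symmetric polynomials. -/
theorem free_of_rank_factorial_over_symmetric (k : Type*) [Field k] (ℓ : ℕ) :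
    Nonempty (Module.Basis (Fin (Nat.factorial ℓ))
      (Algebra.adjoin k (Set.range fun i : Fin ℓ => esymm (Fin ℓ) k ((i : ℕ) + 1)))
      (MvPolynomial (Fin ℓ) k)) := by
  classical
  let e : FreeSym.D ℓ ≃ Fin (Nat.factorial ℓ) :=
    Fintype.equivFinOfCardEq (FreeSym.card_D ℓ)
  refine ⟨Module.Basis.mk (v := fun i => FreeSym.bas k ℓ (e.symm i)) ?_ ?_⟩
  · exact (FreeSym.li_A k ℓ).comp e.symm e.symm.injective
  · rw [show (fun i => FreeSym.bas k ℓ (e.symm i)) = FreeSym.bas k ℓ ∘ ⇑e.symm from rfl,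
      e.symm.surjective.range_comp]
    exact FreeSym.top_le_M k ℓ
end

section
/- Let S = F_2[t_1,...,t_ℓ] with elementary symmetric polynomials c_1,...,c_ℓ. There is an isomorphism of graded F_2-vector spaces (c_1,...,c_ℓ)/(c_1^2,...,c_ℓ^2) ≅ Λ^+(c_1,...,c_ℓ) ⊗_{F_2} S/(c_1,...,c_ℓ), where Λ^+(c_1,...,c_ℓ) denotes the F_2-span of the squarefree monomials c_{i_1}···c_{i_k} with 1 ≤ i_1 < ... < i_k ≤ ℓ, k ≥ 1. Equivalently, the images of the products c_{i_1}···c_{i_k}·m, where m ranges over a monomial basis of the coinvariant algebra S/(c_1,...,c_ℓ), form an F_2-basis of the quotient of ideals. -/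
open MvPolynomial

set_option synthInstance.maxHeartbeats 1000000
set_option maxHeartbeats 2000000

namespace DSO

variable {ℓ : ℕ}

/-- indicator finsupp of a finset -/
noncomputable def ind (ε : Finset (Fin ℓ)) : Fin ℓ →₀ ℕ :=
  Finsupp.indicator ε (fun _ _ => 1)

lemma ind_apply (ε : Finset (Fin ℓ)) (i : Fin ℓ) :
    ind ε i = if i ∈ ε then 1 else 0 := by
  classical
  simp [ind, Finsupp.indicator_apply]

noncomputable def half (a : Fin ℓ →₀ ℕ) : Fin ℓ →₀ ℕ :=
  Finsupp.mapRange (· / 2) (by norm_num) a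

lemma half_apply (a : Fin ℓ →₀ ℕ) (i : Fin ℓ) : half a i = a i / 2 := rfl

noncomputable def par (a : Fin ℓ →₀ ℕ) : Finset (Fin ℓ) :=
  a.support.filter (fun i => a i % 2 = 1)

lemma mem_par (a : Fin ℓ →₀ ℕ) (i : Fin ℓ) : i ∈ par a ↔ a i % 2 = 1 := by
  simp only [par, Finset.mem_filter, Finsupp.mem_support_iff]
  constructor
  · exact fun h => h.2
  · intro h; exact ⟨by omega, h⟩

noncomputable def emb (ε : Finset (Fin ℓ)) : (Fin ℓ →₀ ℕ) → (Fin ℓ →₀ ℕ) :=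
  fun b => 2 • b + ind ε

lemma emb_apply (ε : Finset (Fin ℓ)) (b : Fin ℓ →₀ ℕ) (i : Fin ℓ) :
    emb ε b i = 2 * b i + ind ε i := by
  simp [emb, Finsupp.add_apply, Finsupp.smul_apply]

lemma emb_eq_iff (ε : Finset (Fin ℓ)) (b a : Fin ℓ →₀ ℕ) :
    emb ε b = a ↔ (b = half a ∧ ε = par a) := by
  constructor
  · rintro rfl
    constructor
    · ext i; rw [half_apply, emb_apply, ind_apply]
      split <;> omega
    · ext i; rw [mem_par, emb_apply, ind_apply]
      split <;> simp_all <;> omega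
  · rintro ⟨rfl, rfl⟩
    ext i
    rw [emb_apply, half_apply, ind_apply]
    by_cases h : i ∈ par a
    · rw [if_pos h]; rw [mem_par] at h; omega
    · rw [if_neg h]; rw [mem_par] at h; omega

lemma emb_inj (ε : Finset (Fin ℓ)) : Function.Injective (emb ε) := by
  intro b b' h
  have h1 := (emb_eq_iff ε b (emb ε b')).mp h
  have h2 := (emb_eq_iff ε b' (emb ε b')).mp rfl
  rw [h1.1, ← h2.1]

lemma par_emb (ε : Finset (Fin ℓ)) (b : Fin ℓ →₀ ℕ) : par (emb ε b) = ε :=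
  ((emb_eq_iff ε b _).mp rfl).2.symm

lemma half_emb (ε : Finset (Fin ℓ)) (b : Fin ℓ →₀ ℕ) : half (emb ε b) = b :=
  ((emb_eq_iff ε b _).mp rfl).1.symm

lemma emb_par_half (a : Fin ℓ →₀ ℕ) : emb (par a) (half a) = a :=
  (emb_eq_iff _ _ _).mpr ⟨rfl, rfl⟩

/-- the `ε`-Frobenius-coordinate linear map. -/
noncomputable def U (ε : Finset (Fin ℓ)) :
    MvPolynomial (Fin ℓ) (ZMod 2) →ₗ[ZMod 2] MvPolynomial (Fin ℓ) (ZMod 2) :=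
  (AddMonoidAlgebra.coeffLinearEquiv (ZMod 2)).symm.toLinearMap ∘ₗ
    Finsupp.lcomapDomain (emb ε) (emb_inj ε) ∘ₗ (AddMonoidAlgebra.coeffLinearEquiv (ZMod 2)).toLinearMap

lemma coeff_U (ε : Finset (Fin ℓ)) (f : MvPolynomial (Fin ℓ) (ZMod 2)) (b : Fin ℓ →₀ ℕ) :
    coeff b (U ε f) = coeff (emb ε b) f := rfl

end DSO

namespace DSO2
open DSO

variable {ℓ : ℕ}

local notation "S" => MvPolynomial (Fin ℓ) (ZMod 2)

lemma zmod2_sq (r : ZMod 2) : r ^ 2 = r := by fin_cases r <;> rfl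

lemma sq_add (f g : S) : (f + g) ^ 2 = f ^ 2 + g ^ 2 := CharTwo.add_sq f g

lemma U_monomial (ε : Finset (Fin ℓ)) (a : Fin ℓ →₀ ℕ) (r : ZMod 2) :
    U ε (monomial a r) = if par a = ε then monomial (half a) r else 0 := by
  classical
  apply MvPolynomial.ext
  intro b
  rw [coeff_U, coeff_monomial]
  by_cases hpe : par a = ε
  · subst hpe
    rw [if_pos rfl, coeff_monomial]
    by_cases hb : b = half a
    · subst hb
      rw [if_pos (emb_par_half a).symm, if_pos rfl]
    · rw [if_neg, if_neg (by exact fun h => hb h.symm)]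
      intro h
      exact hb (((emb_eq_iff _ _ _).mp h.symm).1)
  · rw [if_neg hpe, coeff_zero, if_neg]
    intro h
    exact hpe (((emb_eq_iff _ _ _).mp h.symm).2.symm)

lemma sq_monomial (a : Fin ℓ →₀ ℕ) (r : ZMod 2) :
    (monomial a r) ^ 2 = monomial (2 • a) r := by
  rw [monomial_pow, zmod2_sq]

/-- reconstruction: `f = ∑_ε (U ε f)^2 * X^{ind ε}` -/
lemma reconstruct (f : S) :
    ∑ ε : Finset (Fin ℓ), (U ε f) ^ 2 * monomial (ind ε) 1 = f := by
  classical
  induction f using MvPolynomial.induction_on' with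
  | monomial a r =>
    rw [Finset.sum_eq_single (par a)]
    · rw [U_monomial, if_pos rfl, sq_monomial, monomial_mul, mul_one]
      have h3 : (2 : ℕ) • half a + ind (par a) = a := emb_par_half a
      rw [h3]
    · intro ε _ hne
      rw [U_monomial, if_neg (fun h => hne h.symm)]
      simp
    · intro h; exact absurd (Finset.mem_univ _) h
  | add p q hp hq =>
    conv_rhs => rw [← hp, ← hq]
    rw [← Finset.sum_add_distrib]
    apply Finset.sum_congr rfl
    intro ε _
    rw [map_add, sq_add, add_mul]

/-- semilinearity: `U ε (f^2 * g) = f * U ε g` -/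
lemma U_sq_mul (ε : Finset (Fin ℓ)) (f g : S) :
    U ε (f ^ 2 * g) = f * U ε g := by
  classical
  induction f using MvPolynomial.induction_on' with
  | monomial c r =>
    induction g using MvPolynomial.induction_on' with
    | monomial a s =>
      rw [sq_monomial, monomial_mul, U_monomial, U_monomial]
      have hpar : par (2 • c + a) = par a := by
        ext i
        rw [mem_par, mem_par]
        have : (2 • c + a) i = 2 * c i + a i := by
          simp [Finsupp.add_apply, Finsupp.smul_apply]
        omega
      rw [hpar]
      by_cases h : par a = ε
      · rw [if_pos h, if_pos h, monomial_mul]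
        have hh : half (2 • c + a) = c + half a := by
          ext i
          simp only [half_apply, Finsupp.add_apply, Finsupp.smul_apply, smul_eq_mul]
          omega
        rw [hh]
      · rw [if_neg h, if_neg h, mul_zero]
    | add p q hp hq =>
      rw [mul_add, map_add, map_add, mul_add, hp, hq]
  | add p q hp hq =>
    rw [sq_add, add_mul, map_add, hp, hq, add_mul]

lemma U_ind (ε δ : Finset (Fin ℓ)) :
    U ε ((monomial (ind δ) 1 : S)) = if δ = ε then 1 else 0 := by
  have hpar : par (ind δ) = δ := by
    ext i; rw [mem_par, ind_apply]; split <;> simp_all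
  have hhalf : half (ind δ) = 0 := by
    ext i; rw [half_apply, ind_apply]; split <;> rfl
  rw [U_monomial, hpar, hhalf]
  split <;> simp



section Ideals

noncomputable def cc : Fin ℓ → S := fun i => esymm (Fin ℓ) (ZMod 2) ((i : ℕ) + 1)

noncomputable def Ic : Ideal S := Ideal.span (Set.range (cc (ℓ := ℓ)))

noncomputable def Jc : Ideal S := Ideal.span (Set.range fun i : Fin ℓ => cc i ^ 2)

lemma sq_mem_J {x : S} (hx : x ∈ Ic) : x ^ 2 ∈ Jc := by
  obtain ⟨g, hg⟩ := Ideal.mem_span_range_iff_exists_fun.mp hx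
  rw [← hg, CharTwo.sum_sq]
  apply Ideal.sum_mem
  intro i _
  rw [mul_pow]
  exact Ideal.mul_mem_left _ _ (Ideal.subset_span ⟨i, rfl⟩)

lemma U_mem_I_of_mem_J {f : S} (hf : f ∈ Jc) (ε : Finset (Fin ℓ)) : U ε f ∈ Ic := by
  obtain ⟨g, hg⟩ := Ideal.mem_span_range_iff_exists_fun.mp hf
  rw [← hg, map_sum]
  apply Ideal.sum_mem
  intro i _
  rw [mul_comm, U_sq_mul]
  exact Ideal.mul_mem_right _ _ (Ideal.subset_span ⟨i, rfl⟩)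

lemma mem_J_iff {f : S} : f ∈ Jc ↔ ∀ ε : Finset (Fin ℓ), U ε f ∈ Ic := by
  constructor
  · exact fun h ε => U_mem_I_of_mem_J h ε
  · intro h
    rw [← reconstruct f]
    apply Ideal.sum_mem
    intro ε _
    exact Ideal.mul_mem_right _ _ (sq_mem_J (h ε))

lemma X_pow_mem_I (i : Fin ℓ) : (X i : S) ^ ℓ ∈ Ic := by
  have hprod := MvPolynomial.prod_C_add_X_eq_sum_esymm (ZMod 2) (Fin ℓ)
  have heval := congrArg (Polynomial.eval (X i : S)) hprod
  rw [Polynomial.eval_prod, Polynomial.eval_finset_sum] at heval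
  have hzero : (∏ j : Fin ℓ, Polynomial.eval (X i : S)
      (Polynomial.X + Polynomial.C (X j))) = 0 := by
    apply Finset.prod_eq_zero (Finset.mem_univ i)
    rw [Polynomial.eval_add, Polynomial.eval_X, Polynomial.eval_C]
    exact CharTwo.add_self_eq_zero _
  rw [hzero] at heval
  simp only [Polynomial.eval_mul, Polynomial.eval_C, Polynomial.eval_pow,
    Polynomial.eval_X, Fintype.card_fin] at heval
  rw [Finset.sum_range_succ'] at heval
  have hsum : (X i : S) ^ ℓ = ∑ j ∈ Finset.range ℓ,
      esymm (Fin ℓ) (ZMod 2) (j + 1) * (X i : S) ^ (ℓ - (j + 1)) := by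
    have := heval.symm
    rw [esymm_zero, one_mul, Nat.sub_zero] at this
    have h2 := congrArg (fun z => z + (X i : S) ^ ℓ) this
    simp only [zero_add] at h2
    rw [add_assoc, CharTwo.add_self_eq_zero, add_zero] at h2
    exact h2.symm
  rw [hsum]
  apply Ideal.sum_mem
  intro j hj
  rw [Finset.mem_range] at hj
  apply Ideal.mul_mem_right
  exact Ideal.subset_span ⟨⟨j, hj⟩, rfl⟩

lemma monomial_mem_I {a : Fin ℓ →₀ ℕ} (i : Fin ℓ) (h : ℓ ≤ a i) :
    monomial a (1 : ZMod 2) ∈ Ic (ℓ := ℓ) := by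
  have ha : a = (a - Finsupp.single i ℓ) + Finsupp.single i ℓ := by
    ext j
    by_cases hj : j = i
    · subst hj
      simp only [Finsupp.add_apply, Finsupp.tsub_apply, Finsupp.single_eq_same]
      omega
    · simp [Finsupp.single_eq_of_ne' (fun hh => hj hh.symm)]
  rw [ha, ← one_mul (1 : ZMod 2), ← monomial_mul, ← X_pow_eq_monomial]
  exact Ideal.mul_mem_left _ _ (X_pow_mem_I i)

noncomputable def mkI : S →ₗ[ZMod 2] (S ⧸ Ic (ℓ := ℓ)) :=
  (Ideal.Quotient.mkₐ (ZMod 2) Ic).toLinearMap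

lemma mkI_apply (f : S) : mkI f = Ideal.Quotient.mk (Ic (ℓ := ℓ)) f := rfl

lemma mkI_eq_zero {f : S} (h : f ∈ Ic (ℓ := ℓ)) : mkI f = 0 := by
  rw [mkI_apply, Ideal.Quotient.eq_zero_iff_mem]
  exact h

lemma quotI_finite : Module.Finite (ZMod 2) (S ⧸ Ic (ℓ := ℓ)) := by
  classical
  constructor
  rw [Submodule.fg_def]
  refine ⟨Set.range (fun v : Fin ℓ → Fin (ℓ+1) =>
      mkI (monomial (Finsupp.equivFunOnFinite.symm fun i => ((v i : ℕ))) 1)),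
    Set.finite_range _, ?_⟩
  rw [Submodule.eq_top_iff']
  intro x
  obtain ⟨f, rfl⟩ := Ideal.Quotient.mk_surjective x
  rw [← mkI_apply, ← support_sum_monomial_coeff f, map_sum]
  apply Submodule.sum_mem
  intro a _
  have h1 : monomial a (coeff a f) = (coeff a f) • monomial a (1 : ZMod 2) := by
    rw [smul_monomial, smul_eq_mul, mul_one]
  rw [h1, map_smul]
  apply Submodule.smul_mem
  by_cases hc : ∀ i, a i < ℓ + 1
  · apply Submodule.subset_span
    have he : (Finsupp.equivFunOnFinite.symm fun i => (((⟨a i, hc i⟩ : Fin (ℓ+1)) : ℕ))) = a := by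
      ext j; simp [Finsupp.equivFunOnFinite]
    exact ⟨fun i => ⟨a i, hc i⟩, by simp only []; rw [he]⟩
  · push_neg at hc
    obtain ⟨i, hi⟩ := hc
    rw [mkI_eq_zero (monomial_mem_I i (by omega))]
    exact Submodule.zero_mem _

noncomputable def Phi : S →ₗ[ZMod 2] (Finset (Fin ℓ) → (S ⧸ Ic (ℓ := ℓ))) :=
  LinearMap.pi (fun ε => mkI ∘ₗ U ε)

lemma Phi_apply (f : S) (ε : Finset (Fin ℓ)) : Phi f ε = mkI (U ε f) := rfl

lemma Phi_surjective : Function.Surjective (Phi (ℓ := ℓ)) := by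
  classical
  intro v
  choose g hg using fun ε => Ideal.Quotient.mk_surjective (v ε)
  refine ⟨∑ ε : Finset (Fin ℓ), (g ε) ^ 2 * monomial (ind ε) 1, ?_⟩
  funext δ
  rw [Phi_apply, map_sum]
  have h1 : ∀ ε : Finset (Fin ℓ), U δ ((g ε) ^ 2 * monomial (ind ε) 1) =
      g ε * (if ε = δ then 1 else 0) := by
    intro ε
    rw [U_sq_mul, U_ind]
  rw [Finset.sum_congr rfl (fun ε _ => h1 ε), Finset.sum_eq_single δ]
  · rw [if_pos rfl, mul_one, mkI_apply, hg]
  · intro ε _ hne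
    rw [if_neg hne, mul_zero]
  · intro h; exact absurd (Finset.mem_univ _) h

lemma ker_Phi : LinearMap.ker (Phi (ℓ := ℓ)) = Submodule.restrictScalars (ZMod 2) Jc := by
  refine SetLike.ext fun f => ?_
  rw [LinearMap.mem_ker, Submodule.restrictScalars_mem, mem_J_iff, funext_iff]
  apply forall_congr'
  intro ε
  rw [Phi_apply, mkI_apply, Pi.zero_apply, Ideal.Quotient.eq_zero_iff_mem]

noncomputable def equivJ : (S ⧸ Jc (ℓ := ℓ)) ≃ₗ[ZMod 2] (Finset (Fin ℓ) → (S ⧸ Ic (ℓ := ℓ))) :=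
  (Submodule.Quotient.restrictScalarsEquiv (ZMod 2) (Jc (ℓ := ℓ))).symm.trans
    ((Submodule.quotEquivOfEq _ _ ker_Phi.symm).trans
      ((Phi (ℓ := ℓ)).quotKerEquivOfSurjective Phi_surjective))

noncomputable def mkJ : S →ₗ[ZMod 2] (S ⧸ Jc (ℓ := ℓ)) :=
  (Ideal.Quotient.mkₐ (ZMod 2) Jc).toLinearMap

lemma mkJ_apply (f : S) : mkJ f = Ideal.Quotient.mk (Jc (ℓ := ℓ)) f := rfl

section Fam

variable {ι : Type*} (m : ι → MvPolynomial (Fin ℓ) (ZMod 2))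

/-- the family indexed by nonempty subsets -/
noncomputable def Gne : {T : Finset (Fin ℓ) // T.Nonempty} × ι → (S ⧸ Jc (ℓ := ℓ)) :=
  fun x => mkJ ((∏ i ∈ x.1.1, cc i) * m x.2)

/-- the full family -/
noncomputable def Gall : Finset (Fin ℓ) × ι → (S ⧸ Jc (ℓ := ℓ)) :=
  fun x => mkJ ((∏ i ∈ x.1, cc i) * m x.2)

variable (bm : Module.Basis ι (ZMod 2) (MvPolynomial (Fin ℓ) (ZMod 2) ⧸ Ic (ℓ := ℓ)))
  (hbm : ∀ j : ι, bm j = Ideal.Quotient.mk (Ic (ℓ := ℓ)) (m j))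

section FT
variable [Fintype ι]

include bm hbm in
lemma decomp (s : S) : ∃ (r : ι → ZMod 2) (y : S), y ∈ Ic (ℓ := ℓ) ∧
    s = (∑ j, r j • m j) + y := by
  have hbm' : Set.range ⇑bm = Set.range fun j => mkI (ℓ := ℓ) (m j) :=
    congrArg Set.range (funext hbm)
  have hs : mkI (ℓ := ℓ) s ∈
      Submodule.span (ZMod 2) (Set.range fun j => mkI (ℓ := ℓ) (m j)) := by
    rw [← hbm', bm.span_eq]
    exact Submodule.mem_top
  obtain ⟨r, hr⟩ := Finsupp.mem_span_range_iff_exists_finsupp.mp hs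
  rw [Finsupp.sum_fintype r (fun i a => a • mkI (ℓ := ℓ) (m i)) (fun j => zero_smul _ _)] at hr
  set w : S := ∑ j, (r j : ZMod 2) • m j with hw
  have hmkw : mkI (ℓ := ℓ) w = mkI s := by
    rw [hw, map_sum]
    simp only [map_smul]
    exact hr
  have hmem : s + w ∈ Ic (ℓ := ℓ) := by
    have h2 : s - w ∈ Ic (ℓ := ℓ) := by
      rw [mkI_apply, mkI_apply] at hmkw
      exact (Ideal.Quotient.eq).mp hmkw.symm
    rwa [CharTwo.sub_eq_add] at h2
  refine ⟨fun j => r j, s + w, hmem, ?_⟩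
  have hfin : w + (s + w) = s := by
    rw [add_comm s w, ← add_assoc, CharTwo.add_self_eq_zero, zero_add]
  exact hfin.symm

include bm hbm in
lemma step_helper (T : Finset (Fin ℓ)) (hT : T.Nonempty)
    (Hins : ∀ i ∉ T, ∀ g : S,
      mkJ ((∏ j ∈ insert i T, cc j) * g) ∈
        Submodule.span (ZMod 2) (Set.range (Gne (ℓ := ℓ) m)))
    (s : S) :
    mkJ ((∏ i ∈ T, cc i) * s) ∈
      Submodule.span (ZMod 2) (Set.range (Gne (ℓ := ℓ) m)) := by
  classical
  obtain ⟨r, y, hy, rfl⟩ := decomp m bm hbm s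
  rw [mul_add, map_add]
  apply Submodule.add_mem
  · rw [Finset.mul_sum, map_sum]
    apply Submodule.sum_mem
    intro j _
    rw [mul_smul_comm, map_smul]
    apply Submodule.smul_mem
    exact Submodule.subset_span ⟨(⟨T, hT⟩, j), rfl⟩
  · obtain ⟨g, hg⟩ := Ideal.mem_span_range_iff_exists_fun.mp hy
    rw [← hg, Finset.mul_sum, map_sum]
    apply Submodule.sum_mem
    intro i _
    by_cases hi : i ∈ T
    · have hfac : (∏ j ∈ T, cc j) * (g i * cc i) =
          cc i ^ 2 * ((∏ j ∈ T.erase i, cc j) * g i) := by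
        rw [← Finset.mul_prod_erase T cc hi]; ring
      rw [hfac, mkJ_apply, Ideal.Quotient.eq_zero_iff_mem.mpr]
      · exact Submodule.zero_mem _
      · exact Ideal.mul_mem_right _ _ (Ideal.subset_span ⟨i, rfl⟩)
    · have hfac : (∏ j ∈ T, cc j) * (g i * cc i) =
          (∏ j ∈ insert i T, cc j) * g i := by
        rw [Finset.prod_insert hi]; ring
      rw [hfac]
      exact Hins i hi (g i)

include bm hbm in
lemma claimA : ∀ (k : ℕ) (T : Finset (Fin ℓ)), T.Nonempty → ℓ - T.card ≤ k → ∀ s : S,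
    mkJ ((∏ i ∈ T, cc i) * s) ∈
      Submodule.span (ZMod 2) (Set.range (Gne (ℓ := ℓ) m)) := by
  intro k
  induction k with
  | zero =>
    intro T hT hle s
    apply step_helper m bm hbm T hT _ s
    intro i hi g
    exfalso
    have : T = Finset.univ := by
      apply Finset.eq_univ_of_card
      rw [Fintype.card_fin]
      have := Finset.card_le_univ T
      simp only [Finset.card_univ, Fintype.card_fin] at this
      omega
    rw [this] at hi
    exact hi (Finset.mem_univ i)
  | succ k ih =>
    intro T hT hle s
    apply step_helper m bm hbm T hT _ s
    intro i hi g
    apply ih (insert i T) ⟨i, Finset.mem_insert_self i T⟩ _ g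
    have hcard : (insert i T).card = T.card + 1 := Finset.card_insert_of_notMem hi
    have hle2 : T.card < ℓ := by
      have h3 : (insert i T).card ≤ ℓ := by
        have := Finset.card_le_univ (insert i T)
        simp only [Finset.card_univ, Fintype.card_fin] at this
        exact this
      omega
    omega

include bm hbm in
lemma memI_span {y : S} (hy : y ∈ Ic (ℓ := ℓ)) :
    mkJ y ∈ Submodule.span (ZMod 2) (Set.range (Gne (ℓ := ℓ) m)) := by
  classical
  obtain ⟨g, hg⟩ := Ideal.mem_span_range_iff_exists_fun.mp hy
  rw [← hg, map_sum]
  apply Submodule.sum_mem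
  intro i _
  have h1 : g i * cc i = (∏ j ∈ ({i} : Finset (Fin ℓ)), cc j) * g i := by
    rw [Finset.prod_singleton]; ring
  rw [h1]
  exact claimA m bm hbm ℓ {i} ⟨i, Finset.mem_singleton_self i⟩ (by omega) (g i)

include bm hbm in
lemma span_Gne_eq :
    Submodule.span (ZMod 2) (Set.range (Gne (ℓ := ℓ) m)) =
      Submodule.restrictScalars (ZMod 2)
        (Ideal.map (Ideal.Quotient.mk (Jc (ℓ := ℓ))) (Ic (ℓ := ℓ))) := by
  apply le_antisymm
  · rw [Submodule.span_le]
    rintro _ ⟨⟨⟨T, hT⟩, j⟩, rfl⟩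
    obtain ⟨i, hi⟩ := hT
    have hmem : (∏ i ∈ T, cc i) * m j ∈ Ic (ℓ := ℓ) := by
      rw [← Finset.mul_prod_erase T cc hi, mul_assoc]
      exact Ideal.mul_mem_right _ _ (Ideal.subset_span ⟨i, rfl⟩)
    exact Ideal.mem_map_of_mem _ hmem
  · intro x hx
    rw [Submodule.restrictScalars_mem] at hx
    obtain ⟨y, hy, rfl⟩ :=
      (Ideal.mem_map_iff_of_surjective _ Ideal.Quotient.mk_surjective).mp hx
    exact memI_span m bm hbm hy

include bm hbm in
lemma span_Gall_top :
    ⊤ ≤ Submodule.span (ZMod 2) (Set.range (Gall (ℓ := ℓ) m)) := by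
  intro x _
  obtain ⟨f, rfl⟩ := Ideal.Quotient.mk_surjective x
  obtain ⟨r, y, hy, rfl⟩ := decomp m bm hbm f
  rw [← mkJ_apply, map_add]
  apply Submodule.add_mem
  · rw [map_sum]
    apply Submodule.sum_mem
    intro j _
    rw [map_smul]
    apply Submodule.smul_mem
    apply Submodule.subset_span
    refine ⟨(∅, j), ?_⟩
    show mkJ ((∏ i ∈ (∅ : Finset (Fin ℓ)), cc i) * m j) = mkJ (m j)
    rw [Finset.prod_empty, one_mul]
  · have h1 := memI_span m bm hbm hy
    have h2 : Submodule.span (ZMod 2) (Set.range (Gne (ℓ := ℓ) m)) ≤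
        Submodule.span (ZMod 2) (Set.range (Gall (ℓ := ℓ) m)) := by
      apply Submodule.span_mono
      rintro _ ⟨⟨⟨T, hT⟩, j⟩, rfl⟩
      exact ⟨(T, j), rfl⟩
    exact h2 h1

include hbm in
lemma indep_Gall : LinearIndependent (ZMod 2) (Gall (ℓ := ℓ) m) := by
  haveI : Module.Finite (ZMod 2) (S ⧸ Ic (ℓ := ℓ)) := quotI_finite
  let BJ := (Pi.basis (fun _ : Finset (Fin ℓ) => bm)).map (equivJ (ℓ := ℓ)).symm
  refine linearIndependent_of_top_le_span_of_card_eq_finrank (span_Gall_top m bm hbm) ?_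
  rw [Module.finrank_eq_card_basis BJ]
  simp [Fintype.card_sigma]

include hbm in
lemma indep_Gne : LinearIndependent (ZMod 2) (Gne (ℓ := ℓ) m) := by
  have h := indep_Gall m bm hbm
  have heq : Gne (ℓ := ℓ) m = (Gall (ℓ := ℓ) m) ∘
      (fun x : {T : Finset (Fin ℓ) // T.Nonempty} × ι => (x.1.1, x.2)) := rfl
  rw [heq]
  apply h.comp
  intro x y hxy
  simp only [Prod.mk.injEq] at hxy
  exact Prod.ext (Subtype.ext hxy.1) hxy.2

end FT
end Fam
end Ideals
end DSO2

/-- For `S = F_2[t_1,...,t_ℓ]` with elementary symmetric polynomials `c_i`, the quotient of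
ideals `(c_1,...,c_ℓ)/(c_1^2,...,c_ℓ^2)` is isomorphic to `Λ⁺(c_1,...,c_ℓ) ⊗ S/(c_1,...,c_ℓ)`:
given any family `m` whose images form a basis of the coinvariant algebra `S/(c_1,...,c_ℓ)`,
the images of the products `(∏_{i ∈ T} c_i)·m_j` (over nonempty `T ⊆ {1,...,ℓ}`) in
`S/(c_1^2,...,c_ℓ^2)` are linearly independent and span the image of the ideal
`(c_1,...,c_ℓ)` there. -/
theorem D_of_split_SO (ℓ : ℕ) (ι : Type*) (m : ι → MvPolynomial (Fin ℓ) (ZMod 2))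
    (bm : Module.Basis ι (ZMod 2) (MvPolynomial (Fin ℓ) (ZMod 2) ⧸
      Ideal.span (Set.range fun i : Fin ℓ => esymm (Fin ℓ) (ZMod 2) ((i : ℕ) + 1))))
    (hbm : ∀ j : ι, bm j = Ideal.Quotient.mk _ (m j)) :
    LinearIndependent (ZMod 2)
      (fun x : {T : Finset (Fin ℓ) // T.Nonempty} × ι =>
        Ideal.Quotient.mk
          (Ideal.span (Set.range fun i : Fin ℓ => esymm (Fin ℓ) (ZMod 2) ((i : ℕ) + 1) ^ 2))
          ((∏ i ∈ x.1.1, esymm (Fin ℓ) (ZMod 2) ((i : ℕ) + 1)) * m x.2)) ∧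
    Submodule.span (ZMod 2)
      (Set.range fun x : {T : Finset (Fin ℓ) // T.Nonempty} × ι =>
        Ideal.Quotient.mk
          (Ideal.span (Set.range fun i : Fin ℓ => esymm (Fin ℓ) (ZMod 2) ((i : ℕ) + 1) ^ 2))
          ((∏ i ∈ x.1.1, esymm (Fin ℓ) (ZMod 2) ((i : ℕ) + 1)) * m x.2))
      = Submodule.restrictScalars (ZMod 2)
          (Ideal.map
            (Ideal.Quotient.mk
              (Ideal.span (Set.range fun i : Fin ℓ => esymm (Fin ℓ) (ZMod 2) ((i : ℕ) + 1) ^ 2)))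
            (Ideal.span (Set.range fun i : Fin ℓ => esymm (Fin ℓ) (ZMod 2) ((i : ℕ) + 1)))) := by
  haveI : Module.Finite (ZMod 2)
      (MvPolynomial (Fin ℓ) (ZMod 2) ⧸
        Ideal.span (Set.range fun i : Fin ℓ => esymm (Fin ℓ) (ZMod 2) ((i : ℕ) + 1))) :=
    DSO2.quotI_finite
  haveI : Finite ι := Module.Finite.finite_basis bm
  letI : Fintype ι := Fintype.ofFinite ι
  exact ⟨DSO2.indep_Gne m bm hbm, DSO2.span_Gne_eq m bm hbm⟩
end

section
/- Let S = F_3[t_1,t_2] with c_1 = t_1 + t_2 and c_2 = t_1 t_2. Then there is an isomorphism of graded F_3-vector spaces (c_1^2, c_1c_2, c_2^2)/(c_1^2, c_1^3, c_2^3) ≅ F_3{c_1c_2, c_2^2, c_1c_2^2} ⊗_{F_3} S/(c_1,c_2), where F_3{c_1c_2, c_2^2, c_1c_2^2} is the 3-dimensional F_3-vector space with the indicated basis and S/(c_1,c_2) is the coinvariant algebra. -/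
open MvPolynomial

set_option synthInstance.maxHeartbeats 1000000
set_option maxHeartbeats 2000000

noncomputable section DHelpers

abbrev P3 := MvPolynomial (Fin 2) (ZMod 3)

def dd (a b : ℕ) : Fin 2 →₀ ℕ := Finsupp.single 0 a + Finsupp.single 1 b

lemma dd_apply_zero (a b : ℕ) : dd a b 0 = a := by simp [dd]
lemma dd_apply_one (a b : ℕ) : dd a b 1 = b := by simp [dd, Finsupp.single_apply]

lemma dd_le_iff {a b a' b' : ℕ} : dd a b ≤ dd a' b' ↔ a ≤ a' ∧ b ≤ b' := by
  constructor
  · intro h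
    exact ⟨by simpa [dd_apply_zero] using h 0, by simpa [dd_apply_one] using h 1⟩
  · rintro ⟨h1, h2⟩ i
    fin_cases i <;> simpa [dd_apply_zero, dd_apply_one]

lemma dd_eq_iff {a b a' b' : ℕ} : dd a b = dd a' b' ↔ a = a' ∧ b = b' := by
  constructor
  · intro h
    constructor
    · have := DFunLike.congr_fun h 0; simpa [dd_apply_zero] using this
    · have := DFunLike.congr_fun h 1; simpa [dd_apply_one] using this
  · rintro ⟨rfl, rfl⟩; rfl

lemma dd_sub (a b a' b' : ℕ) : dd a b - dd a' b' = dd (a - a') (b - b') := by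
  ext i; fin_cases i <;> simp [dd_apply_zero, dd_apply_one, Finsupp.tsub_apply]

lemma mono_eq (a b : ℕ) : (X 0 : P3) ^ a * X 1 ^ b = monomial (dd a b) 1 := by
  rw [X_pow_eq_monomial, X_pow_eq_monomial, monomial_mul, mul_one]; rfl

lemma cfm (a b a' b' : ℕ) (w : P3) :
    coeff (dd a b) ((X 0 : P3) ^ a' * X 1 ^ b' * w)
      = if a' ≤ a ∧ b' ≤ b then coeff (dd (a - a') (b - b')) w else 0 := by
  rw [mono_eq, coeff_monomial_mul', dd_sub]
  simp [dd_le_iff]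

lemma cf_xpow (a b a' b' : ℕ) :
    coeff (dd a b) ((X 0 : P3) ^ a' * X 1 ^ b') = if a' = a ∧ b' = b then 1 else 0 := by
  rw [mono_eq, coeff_monomial]
  simp [dd_eq_iff]

def ψ : P3 →ₐ[ZMod 3] P3 := aeval ![X 0, X 1 - X 0]

lemma ψ_X0 : ψ (X 0) = X 0 := by simp [ψ]
lemma ψ_X1 : ψ (X 1) = X 1 - X 0 := by simp [ψ]
lemma ψ_c1 : ψ (X 0 + X 1) = X 1 := by simp [ψ]
lemma ψ_c2 : ψ (X 0 * X 1) = X 0 * X 1 - X 0 ^ 2 := by simp [ψ]; ring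

def cfL (a b : ℕ) : P3 →ₗ[ZMod 3] ZMod 3 where
  toFun f := coeff (dd a b) (ψ f)
  map_add' p q := by simp [coeff_add]
  map_smul' r p := by simp [coeff_smul]

lemma cfL_apply (a b : ℕ) (f : P3) : cfL a b f = coeff (dd a b) (ψ f) := rfl

lemma h3 : (3 : P3) = 0 := by
  have h : (3 : P3) = C (3 : ZMod 3) := (map_ofNat (C : ZMod 3 →+* P3) 3).symm
  rw [h, show (3 : ZMod 3) = 0 from by decide, map_zero]

lemma coeff_two_mul (m : Fin 2 →₀ ℕ) (p : P3) : coeff m (2 * p) = 2 * coeff m p := by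
  rw [show (2 : P3) = C (2 : ZMod 3) from (map_ofNat (C : ZMod 3 →+* P3) 2).symm, coeff_C_mul]

lemma cfL_C_mul (a b : ℕ) (r : ZMod 3) (p : P3) : cfL a b (C r * p) = r * cfL a b p := by
  rw [cfL_apply, cfL_apply, map_mul, show ψ (C r) = C r from by simp [ψ], coeff_C_mul]

lemma van_c12 (a b : ℕ) (hb : b ≤ 1) (w : P3) : cfL a b ((X 0 + X 1) ^ 2 * w) = 0 := by
  rw [cfL_apply]
  have e : ψ ((X 0 + X 1) ^ 2 * w) = (X 0 : P3) ^ 0 * X 1 ^ 2 * ψ w := by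
    rw [map_mul, map_pow, ψ_c1]; ring
  rw [e, cfm, if_neg (by omega)]

lemma van_c13 (a b : ℕ) (hb : b ≤ 1) (w : P3) : cfL a b ((X 0 + X 1) ^ 3 * w) = 0 := by
  rw [cfL_apply]
  have e : ψ ((X 0 + X 1) ^ 3 * w) = (X 0 : P3) ^ 0 * X 1 ^ 3 * ψ w := by
    rw [map_mul, map_pow, ψ_c1]; ring
  rw [e, cfm, if_neg (by omega)]

lemma van_c23 (a b : ℕ) (ha : a ≤ 5) (hb : b ≤ 1) (w : P3) :
    cfL a b ((X 0 * X 1) ^ 3 * w) = 0 := by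
  rw [cfL_apply]
  have e : ψ ((X 0 * X 1) ^ 3 * w) = (X 0 : P3) ^ 3 * X 1 ^ 3 * ψ w
      + 3 * ((X 0 : P3) ^ 5 * X 1 ^ 1 * ψ w - (X 0 : P3) ^ 4 * X 1 ^ 2 * ψ w)
      - (X 0 : P3) ^ 6 * X 1 ^ 0 * ψ w := by
    rw [map_mul, map_pow, ψ_c2]; ring
  rw [e, h3]
  simp only [zero_mul, add_zero]
  rw [coeff_sub, cfm, cfm, if_neg (by omega), if_neg (by omega), sub_zero]

lemma van_c1c22 (a b : ℕ) (hb : b ≤ 1) (h4 : a ≤ 3 ∨ b = 0) (w : P3) :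
    cfL a b ((X 0 + X 1) * (X 0 * X 1) ^ 2 * w) = 0 := by
  rw [cfL_apply]
  have e : ψ ((X 0 + X 1) * (X 0 * X 1) ^ 2 * w)
      = (X 0 : P3) ^ 2 * X 1 ^ 3 * ψ w - 2 * ((X 0 : P3) ^ 3 * X 1 ^ 2 * ψ w)
        + (X 0 : P3) ^ 4 * X 1 ^ 1 * ψ w := by
    rw [map_mul, map_mul, map_pow, ψ_c1, ψ_c2]; ring
  rw [e, coeff_add, coeff_sub, coeff_two_mul, cfm, cfm, cfm,
    if_neg (by omega), if_neg (by omega), if_neg (by omega)]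
  ring

lemma val_A (a b : ℕ) : cfL a b ((X 0 + X 1) * (X 0 * X 1)) =
    (if 1 = a ∧ 2 = b then 1 else 0) - (if 2 = a ∧ 1 = b then 1 else 0) := by
  rw [cfL_apply]
  have e : ψ ((X 0 + X 1) * (X 0 * X 1)) = (X 0 : P3) ^ 1 * X 1 ^ 2 - X 0 ^ 2 * X 1 ^ 1 := by
    rw [map_mul, ψ_c1, ψ_c2]; ring
  rw [e, coeff_sub, cf_xpow, cf_xpow]

lemma val_Ax (a b : ℕ) : cfL a b ((X 0 + X 1) * (X 0 * X 1) * X 0) =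
    (if 2 = a ∧ 2 = b then 1 else 0) - (if 3 = a ∧ 1 = b then 1 else 0) := by
  rw [cfL_apply]
  have e : ψ ((X 0 + X 1) * (X 0 * X 1) * X 0)
      = (X 0 : P3) ^ 2 * X 1 ^ 2 - X 0 ^ 3 * X 1 ^ 1 := by
    rw [map_mul, map_mul, ψ_c1, ψ_c2, ψ_X0]; ring
  rw [e, coeff_sub, cf_xpow, cf_xpow]

lemma val_B (a b : ℕ) : cfL a b ((X 0 * X 1) ^ 2) =
    (if 2 = a ∧ 2 = b then 1 else 0) - 2 * (if 3 = a ∧ 1 = b then 1 else 0)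
      + (if 4 = a ∧ 0 = b then 1 else 0) := by
  rw [cfL_apply]
  have e : ψ ((X 0 * X 1) ^ 2)
      = (X 0 : P3) ^ 2 * X 1 ^ 2 - 2 * ((X 0 : P3) ^ 3 * X 1 ^ 1) + X 0 ^ 4 * X 1 ^ 0 := by
    rw [map_pow, ψ_c2]; ring
  rw [e, coeff_add, coeff_sub, coeff_two_mul, cf_xpow, cf_xpow, cf_xpow]

lemma val_Bx (a b : ℕ) : cfL a b ((X 0 * X 1) ^ 2 * X 0) =
    (if 3 = a ∧ 2 = b then 1 else 0) - 2 * (if 4 = a ∧ 1 = b then 1 else 0)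
      + (if 5 = a ∧ 0 = b then 1 else 0) := by
  rw [cfL_apply]
  have e : ψ ((X 0 * X 1) ^ 2 * X 0)
      = (X 0 : P3) ^ 3 * X 1 ^ 2 - 2 * ((X 0 : P3) ^ 4 * X 1 ^ 1) + X 0 ^ 5 * X 1 ^ 0 := by
    rw [map_mul, map_pow, ψ_c2, ψ_X0]; ring
  rw [e, coeff_add, coeff_sub, coeff_two_mul, cf_xpow, cf_xpow, cf_xpow]

lemma val_C (a b : ℕ) : cfL a b ((X 0 + X 1) * (X 0 * X 1) ^ 2) =
    (if 2 = a ∧ 3 = b then 1 else 0) - 2 * (if 3 = a ∧ 2 = b then 1 else 0)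
      + (if 4 = a ∧ 1 = b then 1 else 0) := by
  rw [cfL_apply]
  have e : ψ ((X 0 + X 1) * (X 0 * X 1) ^ 2)
      = (X 0 : P3) ^ 2 * X 1 ^ 3 - 2 * ((X 0 : P3) ^ 3 * X 1 ^ 2) + X 0 ^ 4 * X 1 ^ 1 := by
    rw [map_mul, map_pow, ψ_c1, ψ_c2]; ring
  rw [e, coeff_add, coeff_sub, coeff_two_mul, cf_xpow, cf_xpow, cf_xpow]

lemma val_Cx (a b : ℕ) : cfL a b ((X 0 + X 1) * (X 0 * X 1) ^ 2 * X 0) =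
    (if 3 = a ∧ 3 = b then 1 else 0) - 2 * (if 4 = a ∧ 2 = b then 1 else 0)
      + (if 5 = a ∧ 1 = b then 1 else 0) := by
  rw [cfL_apply]
  have e : ψ ((X 0 + X 1) * (X 0 * X 1) ^ 2 * X 0)
      = (X 0 : P3) ^ 3 * X 1 ^ 3 - 2 * ((X 0 : P3) ^ 4 * X 1 ^ 2) + X 0 ^ 5 * X 1 ^ 1 := by
    rw [map_mul, map_mul, map_pow, ψ_c1, ψ_c2, ψ_X0]; ring
  rw [e, coeff_add, coeff_sub, coeff_two_mul, cf_xpow, cf_xpow, cf_xpow]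

lemma cfI (a b : ℕ) (ha : a ≤ 5) (hb : b ≤ 1) {h : P3}
    (hh : h ∈ Ideal.span {((X 0 + X 1) : P3) ^ 2, (X 0 + X 1) ^ 3, (X 0 * X 1) ^ 3}) :
    cfL a b h = 0 := by
  rw [Ideal.mem_span_insert] at hh
  obtain ⟨r1, z1, hz1, rfl⟩ := hh
  rw [Ideal.mem_span_insert] at hz1
  obtain ⟨r2, z2, hz2, rfl⟩ := hz1
  rw [Ideal.mem_span_singleton] at hz2
  obtain ⟨r3, rfl⟩ := hz2
  rw [map_add, map_add, mul_comm r1, mul_comm r2,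
    van_c12 _ _ hb, van_c13 _ _ hb, van_c23 _ _ ha hb]
  ring

lemma cf_c1c2_m (a b : ℕ) (hb : b ≤ 1) (h4 : a ≤ 3 ∨ b = 0) {mj u v : P3} {α β : ZMod 3}
    (hm : mj = C α + C β * X 0 + (X 0 + X 1) * u + (X 0 * X 1) * v) :
    cfL a b ((X 0 + X 1) * (X 0 * X 1) * mj)
      = α * cfL a b ((X 0 + X 1) * (X 0 * X 1))
        + β * cfL a b ((X 0 + X 1) * (X 0 * X 1) * X 0) := by
  have e : (X 0 + X 1) * (X 0 * X 1) * mj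
      = C α * ((X 0 + X 1) * (X 0 * X 1)) + C β * ((X 0 + X 1) * (X 0 * X 1) * X 0)
        + (X 0 + X 1) ^ 2 * ((X 0 * X 1) * u) + (X 0 + X 1) * (X 0 * X 1) ^ 2 * v := by
    rw [hm]; ring
  rw [e, map_add, map_add, map_add, cfL_C_mul, cfL_C_mul,
    van_c12 _ _ hb, van_c1c22 _ _ hb h4]
  ring

lemma cf_c22_m (a b : ℕ) (ha : a ≤ 5) (hb : b ≤ 1) (h4 : a ≤ 3 ∨ b = 0)
    {mj u v : P3} {α β : ZMod 3}
    (hm : mj = C α + C β * X 0 + (X 0 + X 1) * u + (X 0 * X 1) * v) :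
    cfL a b ((X 0 * X 1) ^ 2 * mj)
      = α * cfL a b ((X 0 * X 1) ^ 2) + β * cfL a b ((X 0 * X 1) ^ 2 * X 0) := by
  have e : (X 0 * X 1) ^ 2 * mj
      = C α * ((X 0 * X 1) ^ 2) + C β * ((X 0 * X 1) ^ 2 * X 0)
        + (X 0 + X 1) * (X 0 * X 1) ^ 2 * u + (X 0 * X 1) ^ 3 * v := by
    rw [hm]; ring
  rw [e, map_add, map_add, map_add, cfL_C_mul, cfL_C_mul,
    van_c1c22 _ _ hb h4, van_c23 _ _ ha hb]
  ring

lemma cf_c1c22_m (a b : ℕ) (ha : a ≤ 5) (hb : b ≤ 1) {mj u v : P3} {α β : ZMod 3}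
    (hm : mj = C α + C β * X 0 + (X 0 + X 1) * u + (X 0 * X 1) * v) :
    cfL a b ((X 0 + X 1) * (X 0 * X 1) ^ 2 * mj)
      = α * cfL a b ((X 0 + X 1) * (X 0 * X 1) ^ 2)
        + β * cfL a b ((X 0 + X 1) * (X 0 * X 1) ^ 2 * X 0) := by
  have e : (X 0 + X 1) * (X 0 * X 1) ^ 2 * mj
      = C α * ((X 0 + X 1) * (X 0 * X 1) ^ 2) + C β * ((X 0 + X 1) * (X 0 * X 1) ^ 2 * X 0)
        + (X 0 + X 1) ^ 2 * ((X 0 * X 1) ^ 2 * u) + (X 0 * X 1) ^ 3 * ((X 0 + X 1) * v) := by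
    rw [hm]; ring
  rw [e, map_add, map_add, map_add, cfL_C_mul, cfL_C_mul,
    van_c12 _ _ hb, van_c23 _ _ ha hb]
  ring

lemma decomp1 (f : P3) : ∃ α β : ZMod 3, ∃ u v : P3, f = C α + C β * X 0
    + (X 0 + X 1) * u + (X 0 * X 1) * v := by
  induction f using MvPolynomial.induction_on with
  | C a => exact ⟨a, 0, 0, 0, by simp⟩
  | add p q hp hq =>
    obtain ⟨a1, b1, u1, v1, rfl⟩ := hp
    obtain ⟨a2, b2, u2, v2, rfl⟩ := hq
    exact ⟨a1 + a2, b1 + b2, u1 + u2, v1 + v2, by rw [map_add, map_add]; ring⟩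
  | mul_X p i hp =>
    obtain ⟨a, b, u, v, rfl⟩ := hp
    fin_cases i
    · exact ⟨0, a, u * X 0 + C b * X 0, v * X 0 - C b,
        by simp only [Fin.zero_eta, Fin.mk_one]; rw [map_zero]; ring⟩
    · exact ⟨0, -a, C a + u * X 1, C b + v * X 1,
        by simp only [Fin.zero_eta, Fin.mk_one]; rw [map_zero, map_neg]; ring⟩

end DHelpers
/-- For `S = F_3[t_1,t_2]` with `c_1 = t_1+t_2`, `c_2 = t_1 t_2`, the quotient of ideals
`(c_1^2, c_1c_2, c_2^2)/(c_1^2, c_1^3, c_2^3)` is isomorphic to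
`F_3{c_1c_2, c_2^2, c_1c_2^2} ⊗ S/(c_1,c_2)`: given any family `m` whose images form a basis
of the coinvariant algebra, the images of `a·m_j` for `a ∈ {c_1c_2, c_2^2, c_1c_2^2}` in
`S/(c_1^2, c_1^3, c_2^3)` are linearly independent and span the image of the ideal
`(c_1^2, c_1c_2, c_2^2)`. -/
theorem D_of_versal_PU3 (ι : Type*) (m : ι → MvPolynomial (Fin 2) (ZMod 3))
    (c : ℕ → MvPolynomial (Fin 2) (ZMod 3)) (hc : c = fun n => esymm (Fin 2) (ZMod 3) n)
    (bm : Module.Basis ι (ZMod 3) (MvPolynomial (Fin 2) (ZMod 3) ⧸ Ideal.span {c 1, c 2}))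
    (hbm : ∀ j : ι, bm j = Ideal.Quotient.mk _ (m j)) :
    LinearIndependent (ZMod 3)
      (fun x : Fin 3 × ι =>
        Ideal.Quotient.mk (Ideal.span {c 1 ^ 2, c 1 ^ 3, c 2 ^ 3})
          ((![c 1 * c 2, c 2 ^ 2, c 1 * c 2 ^ 2] x.1) * m x.2)) ∧
    Submodule.span (ZMod 3)
      (Set.range fun x : Fin 3 × ι =>
        Ideal.Quotient.mk (Ideal.span {c 1 ^ 2, c 1 ^ 3, c 2 ^ 3})
          ((![c 1 * c 2, c 2 ^ 2, c 1 * c 2 ^ 2] x.1) * m x.2))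
      = Submodule.restrictScalars (ZMod 3)
          (Ideal.map (Ideal.Quotient.mk (Ideal.span {c 1 ^ 2, c 1 ^ 3, c 2 ^ 3}))
            (Ideal.span {c 1 ^ 2, c 1 * c 2, c 2 ^ 2})) := by
  classical
  have hc1 : c 1 = X 0 + X 1 := by rw [hc]; simp only; rw [esymm_one, Fin.sum_univ_two]
  have hc2 : c 2 = X 0 * X 1 := by
    rw [hc]; simp only
    rw [esymm, show (Finset.univ : Finset (Fin 2)).powersetCard 2 = {Finset.univ} from by decide,
      Finset.sum_singleton, Fin.prod_univ_two]
  rw [hc1, hc2]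
  -- decompositions of the m j
  choose α β u v hm using fun j => decomp1 (m j)
  have e3 : (3 : ZMod 3) = 0 := by decide
  -- facts about the coinvariant quotient
  have hc1mem : (X 0 + X 1 : P3) ∈ Ideal.span {c 1, c 2} := by
    rw [← hc1]; exact Ideal.subset_span (by simp)
  have hc2mem : (X 0 * X 1 : P3) ∈ Ideal.span {c 1, c 2} := by
    rw [← hc2]; exact Ideal.subset_span (by simp)
  have hmk1 : ∀ p : P3, p ∈ Ideal.span {c 1, c 2} →
      Ideal.Quotient.mk (Ideal.span {c 1, c 2}) p = 0 :=
    fun p hp => Ideal.Quotient.eq_zero_iff_mem.2 hp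
  set Lq1 := (Ideal.Quotient.mkₐ (ZMod 3) (Ideal.span {c 1, c 2})).toLinearMap with hLq1def
  have hLq1 : ∀ p : P3, Ideal.Quotient.mk (Ideal.span {c 1, c 2}) p = Lq1 p := fun _ => rfl
  -- pairwise independence of the (α, β) data
  have pair_indep : ∀ (J : Finset ι) (μ : ι → ZMod 3),
      (∑ j ∈ J, μ j * α j) = 0 → (∑ j ∈ J, μ j * β j) = 0 → ∀ j ∈ J, μ j = 0 := by
    intro J μ h1 h2
    refine linearIndependent_iff'.mp bm.linearIndependent J μ ?_
    have step1 : ∑ j ∈ J, μ j • bm j = Lq1 (∑ j ∈ J, μ j • m j) := by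
      rw [map_sum]
      refine Finset.sum_congr rfl fun j _ => ?_
      rw [hbm j, hLq1, map_smul]
    rw [step1]
    have step2 : (∑ j ∈ J, μ j • m j)
        = (∑ j ∈ J, μ j * α j) • (1 : P3) + (∑ j ∈ J, μ j * β j) • X 0
          + ((X 0 + X 1) * (∑ j ∈ J, μ j • u j) + (X 0 * X 1) * (∑ j ∈ J, μ j • v j)) := by
      rw [Finset.sum_smul, Finset.sum_smul, Finset.mul_sum, Finset.mul_sum,
        ← Finset.sum_add_distrib, ← Finset.sum_add_distrib, ← Finset.sum_add_distrib]
      refine Finset.sum_congr rfl fun j _ => ?_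
      rw [hm j]
      simp only [smul_eq_C_mul, map_mul]
      ring
    rw [step2, h1, h2, zero_smul, zero_smul, zero_add, zero_add, ← hLq1,
      map_add, map_mul, map_mul, hmk1 _ hc1mem, hmk1 _ hc2mem, zero_mul, zero_mul, add_zero]
  set I3 : Ideal P3 :=
    Ideal.span {((X 0 + X 1) : P3) ^ 2, (X 0 + X 1) ^ 3, (X 0 * X 1) ^ 3} with hI3def
  set Lq3 := (Ideal.Quotient.mkₐ (ZMod 3) I3).toLinearMap with hLq3def
  have hLq3 : ∀ p : P3, Ideal.Quotient.mk I3 p = Lq3 p := fun _ => rfl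
  have hbm' : ∀ j, Lq1 (m j) = bm j := fun j => (hbm j).symm
  have decomp2 : ∀ f : P3, ∃ (r : ι →₀ ZMod 3) (U V : P3),
      f = (∑ j ∈ r.support, r j • m j) + (X 0 + X 1) * U + (X 0 * X 1) * V := by
    intro f
    set r := bm.repr (Ideal.Quotient.mk (Ideal.span {c 1, c 2}) f) with hr
    have hrepr : ∑ j ∈ r.support, r j • bm j = Lq1 f := by
      have h := bm.linearCombination_repr (Ideal.Quotient.mk (Ideal.span {c 1, c 2}) f)
      rwa [Finsupp.linearCombination_apply, Finsupp.sum] at h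
    have hmem : f - (∑ j ∈ r.support, r j • m j) ∈ Ideal.span {c 1, c 2} := by
      rw [← Ideal.Quotient.eq_zero_iff_mem, hLq1, map_sub, map_sum]
      simp only [map_smul, hbm']
      rw [hrepr, sub_self]
    rw [Ideal.mem_span_pair] at hmem
    obtain ⟨U, V, hUV⟩ := hmem
    rw [hc1, hc2] at hUV
    exact ⟨r, U, V, by linear_combination -hUV⟩
  have hmkz1 : ∀ w : P3, Ideal.Quotient.mk I3 ((X 0 + X 1) ^ 2 * w) = 0 := fun w =>
    Ideal.Quotient.eq_zero_iff_mem.2 (Ideal.mul_mem_right _ _ (Ideal.subset_span (by simp)))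
  have hmkz2 : ∀ w : P3, Ideal.Quotient.mk I3 ((X 0 * X 1) ^ 3 * w) = 0 := fun w =>
    Ideal.Quotient.eq_zero_iff_mem.2 (Ideal.mul_mem_right _ _ (Ideal.subset_span (by simp)))
  constructor
  · -- linear independence
    rw [linearIndependent_iff']
    intro s g hsum x hxs
    set J : Finset ι := s.image Prod.snd with hJdef
    set lam : Fin 3 → ι → ZMod 3 := fun i j => if (i, j) ∈ s then g (i, j) else 0 with hlamdef
    have hsub : s ⊆ Finset.univ ×ˢ J := fun y hy =>
      Finset.mem_product.2 ⟨Finset.mem_univ _, Finset.mem_image_of_mem Prod.snd hy⟩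
    have hsum2 : ∑ y ∈ Finset.univ ×ˢ J, lam y.1 y.2 •
        Ideal.Quotient.mk I3
          ((![(X 0 + X 1) * (X 0 * X 1), (X 0 * X 1) ^ 2,
              (X 0 + X 1) * (X 0 * X 1) ^ 2] y.1) * m y.2) = 0 := by
      rw [← Finset.sum_subset hsub (fun y _ hyn => by
        rw [hlamdef]; simp only
        rw [if_neg (by simpa using hyn), zero_smul])]
      rw [← hsum]
      refine Finset.sum_congr rfl fun y hy => ?_
      rw [hlamdef]; simp only
      rw [if_pos (by simpa using hy)]
    rw [Finset.sum_product, Fin.sum_univ_three] at hsum2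
    simp only [Matrix.cons_val_zero, Matrix.cons_val_one, Matrix.head_cons,
      Matrix.cons_val_two, Matrix.tail_cons] at hsum2
    have hH : (∑ j ∈ J, lam 0 j • ((X 0 + X 1) * (X 0 * X 1) * m j))
        + (∑ j ∈ J, lam 1 j • ((X 0 * X 1) ^ 2 * m j))
        + (∑ j ∈ J, lam 2 j • ((X 0 + X 1) * (X 0 * X 1) ^ 2 * m j)) ∈ I3 := by
      rw [← Ideal.Quotient.eq_zero_iff_mem]
      show Lq3 _ = 0
      rw [map_add, map_add, map_sum, map_sum, map_sum]
      simp only [map_smul]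
      exact hsum2
    have hval : ∀ a b : ℕ, a ≤ 5 → b ≤ 1 →
        (∑ j ∈ J, lam 0 j * cfL a b ((X 0 + X 1) * (X 0 * X 1) * m j))
        + (∑ j ∈ J, lam 1 j * cfL a b ((X 0 * X 1) ^ 2 * m j))
        + (∑ j ∈ J, lam 2 j * cfL a b ((X 0 + X 1) * (X 0 * X 1) ^ 2 * m j)) = 0 := by
      intro a b ha hb
      have h := cfI a b ha hb hH
      rw [map_add, map_add, map_sum, map_sum, map_sum] at h
      simpa only [map_smul, smul_eq_mul] using h
    -- value computations
    have q21A : ∀ j, cfL 2 1 ((X 0 + X 1) * (X 0 * X 1) * m j) = 2 * α j := fun j => by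
      rw [cf_c1c2_m 2 1 (by norm_num) (Or.inl (by norm_num)) (hm j), val_A, val_Ax]
      norm_num
      linear_combination (-(α j)) * e3
    have q21B : ∀ j, cfL 2 1 ((X 0 * X 1) ^ 2 * m j) = 0 := fun j => by
      rw [cf_c22_m 2 1 (by norm_num) (by norm_num) (Or.inl (by norm_num)) (hm j), val_B, val_Bx]
      norm_num
    have q21C : ∀ j, cfL 2 1 ((X 0 + X 1) * (X 0 * X 1) ^ 2 * m j) = 0 := fun j => by
      rw [cf_c1c22_m 2 1 (by norm_num) (by norm_num) (hm j), val_C, val_Cx]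
      norm_num
    have q31A : ∀ j, cfL 3 1 ((X 0 + X 1) * (X 0 * X 1) * m j) = 2 * β j := fun j => by
      rw [cf_c1c2_m 3 1 (by norm_num) (Or.inl (by norm_num)) (hm j), val_A, val_Ax]
      norm_num
      linear_combination (-(β j)) * e3
    have q31B : ∀ j, cfL 3 1 ((X 0 * X 1) ^ 2 * m j) = α j := fun j => by
      rw [cf_c22_m 3 1 (by norm_num) (by norm_num) (Or.inl (by norm_num)) (hm j), val_B, val_Bx]
      norm_num
      linear_combination (-(α j)) * e3
    have q31C : ∀ j, cfL 3 1 ((X 0 + X 1) * (X 0 * X 1) ^ 2 * m j) = 0 := fun j => by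
      rw [cf_c1c22_m 3 1 (by norm_num) (by norm_num) (hm j), val_C, val_Cx]
      norm_num
    have q40A : ∀ j, cfL 4 0 ((X 0 + X 1) * (X 0 * X 1) * m j) = 0 := fun j => by
      rw [cf_c1c2_m 4 0 (by norm_num) (Or.inr rfl) (hm j), val_A, val_Ax]
      norm_num
    have q40B : ∀ j, cfL 4 0 ((X 0 * X 1) ^ 2 * m j) = α j := fun j => by
      rw [cf_c22_m 4 0 (by norm_num) (by norm_num) (Or.inr rfl) (hm j), val_B, val_Bx]
      norm_num
    have q40C : ∀ j, cfL 4 0 ((X 0 + X 1) * (X 0 * X 1) ^ 2 * m j) = 0 := fun j => by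
      rw [cf_c1c22_m 4 0 (by norm_num) (by norm_num) (hm j), val_C, val_Cx]
      norm_num
    have q50A : ∀ j, cfL 5 0 ((X 0 + X 1) * (X 0 * X 1) * m j) = 0 := fun j => by
      rw [cf_c1c2_m 5 0 (by norm_num) (Or.inr rfl) (hm j), val_A, val_Ax]
      norm_num
    have q50B : ∀ j, cfL 5 0 ((X 0 * X 1) ^ 2 * m j) = β j := fun j => by
      rw [cf_c22_m 5 0 (by norm_num) (by norm_num) (Or.inr rfl) (hm j), val_B, val_Bx]
      norm_num
    have q50C : ∀ j, cfL 5 0 ((X 0 + X 1) * (X 0 * X 1) ^ 2 * m j) = 0 := fun j => by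
      rw [cf_c1c22_m 5 0 (by norm_num) (by norm_num) (hm j), val_C, val_Cx]
      norm_num
    have q41C : ∀ j, cfL 4 1 ((X 0 + X 1) * (X 0 * X 1) ^ 2 * m j) = α j := fun j => by
      rw [cf_c1c22_m 4 1 (by norm_num) (by norm_num) (hm j), val_C, val_Cx]
      norm_num
    have q51C : ∀ j, cfL 5 1 ((X 0 + X 1) * (X 0 * X 1) ^ 2 * m j) = β j := fun j => by
      rw [cf_c1c22_m 5 1 (by norm_num) (by norm_num) (hm j), val_C, val_Cx]
      norm_num
    -- stage 1 equations
    have sum_two : ∀ (f g : ι → ZMod 3), (∑ j ∈ J, f j * (2 * g j)) = 2 * ∑ j ∈ J, f j * g j := by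
      intro f g
      rw [Finset.mul_sum]
      exact Finset.sum_congr rfl fun j _ => by ring
    have E21 : 2 * (∑ j ∈ J, lam 0 j * α j) = 0 := by
      have h := hval 2 1 (by norm_num) (by norm_num)
      simp only [q21A, q21B, q21C, mul_zero, Finset.sum_const_zero, add_zero] at h
      rw [sum_two] at h
      exact h
    have E31 : 2 * (∑ j ∈ J, lam 0 j * β j) + (∑ j ∈ J, lam 1 j * α j) = 0 := by
      have h := hval 3 1 (by norm_num) (by norm_num)
      simp only [q31A, q31B, q31C, mul_zero, Finset.sum_const_zero, add_zero] at h
      rw [sum_two] at h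
      exact h
    have E40 : (∑ j ∈ J, lam 1 j * α j) = 0 := by
      have h := hval 4 0 (by norm_num) (by norm_num)
      simp only [q40A, q40B, q40C, mul_zero, Finset.sum_const_zero, add_zero, zero_add] at h
      exact h
    have E50 : (∑ j ∈ J, lam 1 j * β j) = 0 := by
      have h := hval 5 0 (by norm_num) (by norm_num)
      simp only [q50A, q50B, q50C, mul_zero, Finset.sum_const_zero, add_zero, zero_add] at h
      exact h
    have hS0a : (∑ j ∈ J, lam 0 j * α j) = 0 := by
      linear_combination 2 * E21 - (∑ j ∈ J, lam 0 j * α j) * e3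
    have hS0b : (∑ j ∈ J, lam 0 j * β j) = 0 := by
      linear_combination 2 * E31 - 2 * E40 - (∑ j ∈ J, lam 0 j * β j) * e3
    have h0 : ∀ j ∈ J, lam 0 j = 0 := pair_indep J (lam 0) hS0a hS0b
    have h1 : ∀ j ∈ J, lam 1 j = 0 := pair_indep J (lam 1) E40 E50
    -- stage 2 equations
    have E41 : (∑ j ∈ J, lam 2 j * α j) = 0 := by
      have h := hval 4 1 (by norm_num) (by norm_num)
      rw [Finset.sum_eq_zero (fun j hj => by rw [h0 j hj, zero_mul]),
        Finset.sum_eq_zero (fun j hj => by rw [h1 j hj, zero_mul]), zero_add, zero_add] at h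
      simpa only [q41C] using h
    have E51 : (∑ j ∈ J, lam 2 j * β j) = 0 := by
      have h := hval 5 1 (by norm_num) (by norm_num)
      rw [Finset.sum_eq_zero (fun j hj => by rw [h0 j hj, zero_mul]),
        Finset.sum_eq_zero (fun j hj => by rw [h1 j hj, zero_mul]), zero_add, zero_add] at h
      simpa only [q51C] using h
    have h2 : ∀ j ∈ J, lam 2 j = 0 := pair_indep J (lam 2) E41 E51
    -- conclude
    obtain ⟨i, j⟩ := x
    have hjJ : j ∈ J := Finset.mem_image_of_mem Prod.snd hxs
    have key : lam i j = 0 := by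
      fin_cases i
      · exact h0 j hjJ
      · exact h1 j hjJ
      · exact h2 j hjJ
    rw [hlamdef] at key
    simp only at key
    rwa [if_pos hxs] at key
  · -- span
    set T := Submodule.span (ZMod 3)
      (Set.range fun x : Fin 3 × ι =>
        Ideal.Quotient.mk I3
          ((![(X 0 + X 1) * (X 0 * X 1), (X 0 * X 1) ^ 2,
              (X 0 + X 1) * (X 0 * X 1) ^ 2] x.1) * m x.2)) with hTdef
    have claim0 : ∀ w : P3,
        Ideal.Quotient.mk I3 ((X 0 + X 1) * (X 0 * X 1) ^ 2 * w) ∈ T := by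
      intro w
      obtain ⟨r, U, V, hw⟩ := decomp2 w
      have e : (X 0 + X 1) * (X 0 * X 1) ^ 2 * w
          = (∑ j ∈ r.support, r j • ((X 0 + X 1) * (X 0 * X 1) ^ 2 * m j))
            + (X 0 + X 1) ^ 2 * ((X 0 * X 1) ^ 2 * U)
            + (X 0 * X 1) ^ 3 * ((X 0 + X 1) * V) := by
        rw [hw, mul_add, mul_add, Finset.mul_sum]
        congr 1
        · congr 1
          · exact Finset.sum_congr rfl fun j _ => mul_smul_comm _ _ _
          · ring
        · ring
      rw [e, map_add, map_add, hmkz1, hmkz2, add_zero, add_zero, hLq3, map_sum]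
      refine Submodule.sum_mem _ fun j _ => ?_
      rw [map_smul]
      refine Submodule.smul_mem _ _ (Submodule.subset_span ⟨(2, j), ?_⟩)
      simp only [Matrix.cons_val_two, Matrix.tail_cons, Matrix.head_cons]
      rfl
    have claim1 : ∀ w : P3,
        Ideal.Quotient.mk I3 ((X 0 + X 1) * (X 0 * X 1) * w) ∈ T := by
      intro w
      obtain ⟨r, U, V, hw⟩ := decomp2 w
      have e : (X 0 + X 1) * (X 0 * X 1) * w
          = ((∑ j ∈ r.support, r j • ((X 0 + X 1) * (X 0 * X 1) * m j))
            + (X 0 + X 1) ^ 2 * ((X 0 * X 1) * U))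
            + (X 0 + X 1) * (X 0 * X 1) ^ 2 * V := by
        rw [hw, mul_add, mul_add, Finset.mul_sum]
        congr 1
        · congr 1
          · exact Finset.sum_congr rfl fun j _ => mul_smul_comm _ _ _
          · ring
        · ring
      rw [e, map_add, map_add, hmkz1, add_zero]
      refine Submodule.add_mem _ ?_ (claim0 V)
      rw [hLq3, map_sum]
      refine Submodule.sum_mem _ fun j _ => ?_
      rw [map_smul]
      refine Submodule.smul_mem _ _ (Submodule.subset_span ⟨(0, j), ?_⟩)
      simp only [Matrix.cons_val_zero]
      rfl
    have claim2 : ∀ w : P3,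
        Ideal.Quotient.mk I3 ((X 0 * X 1) ^ 2 * w) ∈ T := by
      intro w
      obtain ⟨r, U, V, hw⟩ := decomp2 w
      have e : (X 0 * X 1) ^ 2 * w
          = ((∑ j ∈ r.support, r j • ((X 0 * X 1) ^ 2 * m j))
            + (X 0 + X 1) * (X 0 * X 1) ^ 2 * U)
            + (X 0 * X 1) ^ 3 * V := by
        rw [hw, mul_add, mul_add, Finset.mul_sum]
        congr 1
        · congr 1
          · exact Finset.sum_congr rfl fun j _ => mul_smul_comm _ _ _
          · ring
        · ring
      rw [e, map_add, map_add, hmkz2, add_zero]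
      refine Submodule.add_mem _ ?_ (claim0 U)
      rw [hLq3, map_sum]
      refine Submodule.sum_mem _ fun j _ => ?_
      rw [map_smul]
      refine Submodule.smul_mem _ _ (Submodule.subset_span ⟨(1, j), ?_⟩)
      simp only [Matrix.cons_val_one, Matrix.head_cons]
      rfl
    apply le_antisymm
    · rw [Submodule.span_le]
      rintro _ ⟨⟨i, j⟩, rfl⟩
      rw [SetLike.mem_coe, Submodule.restrictScalars_mem]
      fin_cases i
      · simp only [Matrix.cons_val_zero]
        exact Ideal.mem_map_of_mem _
          (Ideal.mul_mem_right _ _ (Ideal.subset_span (by simp)))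
      · simp only [Matrix.cons_val_one, Matrix.head_cons]
        exact Ideal.mem_map_of_mem _
          (Ideal.mul_mem_right _ _ (Ideal.subset_span (by simp)))
      · have e : (X 0 + X 1 : P3) * (X 0 * X 1) ^ 2 * m j
            = ((X 0 + X 1) * (X 0 * X 1)) * ((X 0 * X 1) * m j) := by ring
        show (Ideal.Quotient.mk I3) ((X 0 + X 1) * (X 0 * X 1) ^ 2 * m j) ∈ _
        rw [e]
        exact Ideal.mem_map_of_mem _
          (Ideal.mul_mem_right _ _ (Ideal.subset_span (by simp)))
    · intro z hz
      rw [Submodule.restrictScalars_mem] at hz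
      obtain ⟨y, hy, rfl⟩ :=
        (Ideal.mem_map_iff_of_surjective _ Ideal.Quotient.mk_surjective).1 hz
      rw [Ideal.mem_span_insert] at hy
      obtain ⟨r1, z1, hz1, rfl⟩ := hy
      rw [Ideal.mem_span_insert] at hz1
      obtain ⟨r2, z2, hz2, rfl⟩ := hz1
      rw [Ideal.mem_span_singleton] at hz2
      obtain ⟨r3, rfl⟩ := hz2
      rw [map_add, map_add]
      refine Submodule.add_mem _ ?_ (Submodule.add_mem _ ?_ ?_)
      · rw [mul_comm r1, hmkz1]
        exact Submodule.zero_mem _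
      · rw [mul_comm r2]
        exact claim1 r2
      · exact claim2 r3
end

section
/- Let V ⊆ F_2[x_1,...,x_h] be the F_2-linear span of the variables x_1,...,x_h. Then in F_2[x_1,...,x_h][z], the product ∏_{v ∈ V} (z + v) equals z^{2^h} + Σ_{i=0}^{h-1} d_i z^{2^i} for suitable polynomials d_i ∈ F_2[x_1,...,x_h]; in particular, only exponents of z that are powers of 2 occur. -/
open MvPolynomial

namespace DicksonAux

noncomputable abbrev vspan (h : ℕ) (c : Fin h → ZMod 2) : MvPolynomial (Fin h) (ZMod 2) :=
  ∑ i : Fin h, C (c i) * X i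

theorem key (h : ℕ) :
    ∃ d : Fin h → MvPolynomial (Fin h) (ZMod 2),
      (∏ c : Fin h → ZMod 2, (Polynomial.X + Polynomial.C (vspan h c)) :
          Polynomial (MvPolynomial (Fin h) (ZMod 2)))
      = Polynomial.X ^ (2 ^ h)
        + ∑ i : Fin h, Polynomial.C (d i) * Polynomial.X ^ (2 ^ (i : ℕ)) := by
  induction h with
  | zero =>
    refine ⟨Fin.elim0, ?_⟩
    simp [vspan]
  | succ h ih =>
    obtain ⟨d, hd⟩ := ih
    set f : MvPolynomial (Fin h) (ZMod 2) →+* MvPolynomial (Fin (h + 1)) (ZMod 2) :=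
      (rename (Fin.succ : Fin h → Fin (h + 1))).toRingHom with hf
    -- inner product lemma
    have inner : ∀ w : MvPolynomial (Fin (h + 1)) (ZMod 2),
        (∏ c : Fin h → ZMod 2, (Polynomial.X + Polynomial.C (w + f (vspan h c))) :
            Polynomial (MvPolynomial (Fin (h + 1)) (ZMod 2)))
        = (Polynomial.X ^ (2 ^ h)
            + ∑ i : Fin h, Polynomial.C (f (d i)) * Polynomial.X ^ (2 ^ (i : ℕ)))
          + Polynomial.C (w ^ (2 ^ h) + ∑ i : Fin h, f (d i) * w ^ (2 ^ (i : ℕ))) := by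
      intro w
      set g : Polynomial (MvPolynomial (Fin h) (ZMod 2)) →+*
          Polynomial (MvPolynomial (Fin (h + 1)) (ZMod 2)) :=
        Polynomial.eval₂RingHom (Polynomial.C.comp f) (Polynomial.X + Polynomial.C w) with hg
      have hgX : g Polynomial.X = Polynomial.X + Polynomial.C w := by
        simp [hg]
      have hgC : ∀ u, g (Polynomial.C u) = Polynomial.C (f u) := by
        intro u; simp [hg]
      have := congrArg g hd
      rw [map_prod, map_add, map_sum, map_pow, hgX] at this
      simp only [map_add, map_mul, map_pow, hgX, hgC] at this
      calc (∏ c : Fin h → ZMod 2, (Polynomial.X + Polynomial.C (w + f (vspan h c))) :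
            Polynomial (MvPolynomial (Fin (h + 1)) (ZMod 2)))
          = ∏ c : Fin h → ZMod 2, ((Polynomial.X + Polynomial.C w)
              + Polynomial.C (f (vspan h c))) := by
            refine Finset.prod_congr rfl fun c _ => ?_
            rw [map_add]; ring
        _ = (Polynomial.X + Polynomial.C w) ^ 2 ^ h
              + ∑ i : Fin h, Polynomial.C (f (d i))
                * (Polynomial.X + Polynomial.C w) ^ 2 ^ (i : ℕ) := this
        _ = _ := by
            have hfrob : ∀ k : ℕ, (Polynomial.X + Polynomial.C w) ^ 2 ^ k
                = Polynomial.X ^ 2 ^ k + Polynomial.C (w ^ 2 ^ k) := by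
              intro k
              rw [add_pow_char_pow, ← Polynomial.C_pow]
            simp only [hfrob]
            rw [Finset.sum_congr rfl (fun i _ => by
              rw [mul_add, ← Polynomial.C_mul] :
                ∀ i ∈ Finset.univ, Polynomial.C (f (d i)) *
                  (Polynomial.X ^ 2 ^ (i:ℕ) + Polynomial.C (w ^ 2 ^ (i:ℕ)))
                = Polynomial.C (f (d i)) * Polynomial.X ^ 2 ^ (i:ℕ)
                  + Polynomial.C (f (d i) * w ^ 2 ^ (i:ℕ)))]
            rw [Finset.sum_add_distrib, map_add, map_sum]
            ring
    -- abbreviations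
    set A : Polynomial (MvPolynomial (Fin (h + 1)) (ZMod 2)) :=
      Polynomial.X ^ (2 ^ h)
        + ∑ i : Fin h, Polynomial.C (f (d i)) * Polynomial.X ^ (2 ^ (i : ℕ)) with hA
    set e : MvPolynomial (Fin (h + 1)) (ZMod 2) :=
      (X 0) ^ (2 ^ h) + ∑ i : Fin h, f (d i) * (X 0) ^ (2 ^ (i : ℕ)) with he
    -- cons decomposition of vspan
    have hvc : ∀ (a : ZMod 2) (c' : Fin h → ZMod 2),
        vspan (h + 1) (Fin.cons a c') = C a * X 0 + f (vspan h c') := by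
      intro a c'
      rw [vspan, Fin.sum_univ_succ, hf]
      simp [vspan, map_sum]
    -- split the big product
    have hsplit : (∏ c : Fin (h + 1) → ZMod 2,
          (Polynomial.X + Polynomial.C (vspan (h + 1) c)) :
          Polynomial (MvPolynomial (Fin (h + 1)) (ZMod 2)))
        = ∏ a : ZMod 2, ∏ c' : Fin h → ZMod 2,
            (Polynomial.X + Polynomial.C (vspan (h + 1) (Fin.cons a c'))) := by
      have h1 := Fintype.prod_equiv (Fin.consEquiv fun _ => ZMod 2)
        (fun p => Polynomial.X + Polynomial.C (vspan (h + 1) (Fin.cons p.1 p.2)))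
        (fun c => Polynomial.X + Polynomial.C (vspan (h + 1) c))
        (fun p => rfl)
      rw [← h1]
      exact Fintype.prod_prod_type _
    have hG : ∀ a : ZMod 2,
        (∏ c' : Fin h → ZMod 2,
          (Polynomial.X + Polynomial.C (vspan (h + 1) (Fin.cons a c'))) :
          Polynomial (MvPolynomial (Fin (h + 1)) (ZMod 2)))
        = A + Polynomial.C ((C a * X 0) ^ (2 ^ h)
            + ∑ i : Fin h, f (d i) * (C a * X 0) ^ (2 ^ (i : ℕ))) := by
      intro a
      rw [show (∏ c' : Fin h → ZMod 2,
          (Polynomial.X + Polynomial.C (vspan (h + 1) (Fin.cons a c'))))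
          = ∏ c' : Fin h → ZMod 2,
            (Polynomial.X + Polynomial.C ((C a * X 0) + f (vspan h c'))) from
        Finset.prod_congr rfl fun c' _ => by rw [hvc]]
      exact inner (C a * X 0)
    have huniv : (Finset.univ : Finset (ZMod 2)) = {0, 1} := by decide
    have hG0 : (∏ c' : Fin h → ZMod 2,
          (Polynomial.X + Polynomial.C (vspan (h + 1) (Fin.cons (0 : ZMod 2) c'))) :
          Polynomial (MvPolynomial (Fin (h + 1)) (ZMod 2))) = A := by
      rw [hG 0]
      have h1 : ((C (0 : ZMod 2) * X 0 : MvPolynomial (Fin (h + 1)) (ZMod 2))) = 0 := by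
        simp
      rw [h1]
      have h2 : (2 : ℕ) ^ h ≠ 0 := (Nat.pos_of_ne_zero (by positivity)).ne'
      simp [zero_pow, h2, (Nat.two_pow_pos h).ne', fun i : Fin h => (Nat.two_pow_pos (i : ℕ)).ne']
    have hG1 : (∏ c' : Fin h → ZMod 2,
          (Polynomial.X + Polynomial.C (vspan (h + 1) (Fin.cons (1 : ZMod 2) c'))) :
          Polynomial (MvPolynomial (Fin (h + 1)) (ZMod 2))) = A + Polynomial.C e := by
      rw [hG 1]
      simp [he]
    -- the new coefficients
    refine ⟨fun i => (Fin.snoc (fun j : Fin h => e * f (d j)) e :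
        Fin (h + 1) → MvPolynomial (Fin (h + 1)) (ZMod 2)) i
      + (Fin.cons (0 : MvPolynomial (Fin (h + 1)) (ZMod 2)) (fun j : Fin h => (f (d j)) ^ 2) :
        Fin (h + 1) → MvPolynomial (Fin (h + 1)) (ZMod 2)) i,
      ?_⟩
    rw [hsplit, huniv, Finset.prod_insert (by decide), Finset.prod_singleton, hG0, hG1]
    -- compute A * (A + C e)
    have hA2 : A ^ 2 = Polynomial.X ^ (2 ^ (h + 1))
        + ∑ j : Fin h, Polynomial.C ((f (d j)) ^ 2)
          * Polynomial.X ^ (2 ^ ((j : ℕ) + 1)) := by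
      rw [hA]
      have : ((Polynomial.X ^ (2 ^ h)
          + ∑ i : Fin h, Polynomial.C (f (d i)) * Polynomial.X ^ (2 ^ (i : ℕ))) :
          Polynomial (MvPolynomial (Fin (h + 1)) (ZMod 2))) ^ 2
          = (Polynomial.X ^ (2 ^ h)) ^ 2
            + ∑ i : Fin h, (Polynomial.C (f (d i)) * Polynomial.X ^ (2 ^ (i : ℕ))) ^ 2 := by
        rw [add_pow_char, sum_pow_char]
      rw [this]
      refine congrArg₂ (· + ·) ?_ ?_
      · rw [← pow_mul, pow_succ]
      · refine Finset.sum_congr rfl fun j _ => ?_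
        rw [mul_pow, ← Polynomial.C_pow, ← pow_mul, ← pow_succ]
    have hCeA : Polynomial.C e * A
        = Polynomial.C e * Polynomial.X ^ (2 ^ h)
          + ∑ j : Fin h, Polynomial.C (e * f (d j)) * Polynomial.X ^ (2 ^ (j : ℕ)) := by
      rw [hA, mul_add, Finset.mul_sum]
      refine congrArg₂ (· + ·) rfl ?_
      refine Finset.sum_congr rfl fun j _ => ?_
      rw [← mul_assoc, ← Polynomial.C_mul]
    -- rewrite the new sum
    have hR : (∑ i : Fin (h + 1),
          Polynomial.C ((Fin.snoc (fun j : Fin h => e * f (d j)) e :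
              Fin (h + 1) → MvPolynomial (Fin (h + 1)) (ZMod 2)) i
            + (Fin.cons (0 : MvPolynomial (Fin (h + 1)) (ZMod 2))
              (fun j : Fin h => (f (d j)) ^ 2) :
              Fin (h + 1) → MvPolynomial (Fin (h + 1)) (ZMod 2)) i)
          * Polynomial.X ^ (2 ^ (i : ℕ)) :
          Polynomial (MvPolynomial (Fin (h + 1)) (ZMod 2)))
        = ((∑ j : Fin h, Polynomial.C (e * f (d j)) * Polynomial.X ^ (2 ^ (j : ℕ)))
            + Polynomial.C e * Polynomial.X ^ (2 ^ h))
          + ∑ j : Fin h, Polynomial.C ((f (d j)) ^ 2)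
            * Polynomial.X ^ (2 ^ ((j : ℕ) + 1)) := by
      simp only [map_add, add_mul]
      rw [Finset.sum_add_distrib]
      refine congrArg₂ (· + ·) ?_ ?_
      · rw [Fin.sum_univ_castSucc]
        simp
      · rw [Fin.sum_univ_succ]
        simp
    refine Eq.trans ?_ (congrArg (Polynomial.X ^ (2 ^ (h + 1)) + ·) hR).symm
    calc A * (A + Polynomial.C e) = A ^ 2 + Polynomial.C e * A := by ring
      _ = _ := by rw [hA2, hCeA]; ring

end DicksonAux

/-- In `F_2[x_1,...,x_h][z]`, the product of `z + v` over all `v` in the `F_2`-span of the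
variables equals `z^{2^h} + Σ_{i<h} d_i z^{2^i}` for suitable `d_i`; in particular only
exponents of `z` that are powers of `2` occur. -/
theorem dickson_product_form (h : ℕ) :
    ∃ d : Fin h → MvPolynomial (Fin h) (ZMod 2),
      (∏ c : Fin h → ZMod 2,
          (Polynomial.X + Polynomial.C (∑ i : Fin h, C (c i) * X i)) :
        Polynomial (MvPolynomial (Fin h) (ZMod 2)))
      = Polynomial.X ^ (2 ^ h)
        + ∑ i : Fin h, Polynomial.C (d i) * Polynomial.X ^ (2 ^ (i : ℕ)) := by
  exact DicksonAux.key h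
end

section
/- Let k be a field and let b_1,...,b_n be a regular sequence of homogeneous polynomials of positive degree in k[t_1,...,t_n] (the number of elements equals the number of variables). Then the quotient k[t_1,...,t_n]/(b_1,...,b_n) is a finite-dimensional k-vector space. -/
open MvPolynomial Module

namespace RegSeqAux

variable {k : Type*} [Field k] {n : ℕ}

local notation "R" => MvPolynomial (Fin n) k

/-- degree-d component of homogeneous * arbitrary -/
lemma comp_homog_mul {b y : R} {e : ℕ} (hb : b.IsHomogeneous e) (d : ℕ) :
    homogeneousComponent d (b * y) =
      if e ≤ d then b * homogeneousComponent (d - e) y else 0 := by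
  conv_lhs => rw [← sum_homogeneousComponent y]
  rw [Finset.mul_sum, map_sum]
  rw [Finset.sum_congr rfl (fun i _ => homogeneousComponent_of_mem
    ((mem_homogeneousSubmodule _ _).2 (hb.mul (homogeneousComponent_isHomogeneous i y))))]
  by_cases h : e ≤ d
  · simp only [show ∀ i, (d = e + i) ↔ (i = d - e) from fun i => by omega]
    rw [Finset.sum_ite_eq' (Finset.range (y.totalDegree + 1)) (d - e)
      (fun i => b * homogeneousComponent i y)]
    rw [if_pos h]
    split_ifs with h2
    · rfl
    · rw [Finset.mem_range, not_lt] at h2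
      rw [homogeneousComponent_eq_zero _ _ (by omega), mul_zero]
  · rw [if_neg h]
    refine Finset.sum_eq_zero fun i _ => ?_
    rw [if_neg (by omega)]

/-- homogeneous components of elements of a span of homogeneous elements stay in the span -/
lemma comp_mem_span {S : Set R} (hS : ∀ s ∈ S, ∃ e, s.IsHomogeneous e)
    {x : R} (hx : x ∈ Ideal.span S) (d : ℕ) : homogeneousComponent d x ∈ Ideal.span S := by
  induction hx using Submodule.span_induction generalizing d with
  | mem s hs =>
    obtain ⟨e, he⟩ := hS s hs
    rw [homogeneousComponent_of_mem ((mem_homogeneousSubmodule _ _).2 he)]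
    split_ifs
    · exact Ideal.subset_span hs
    · exact zero_mem _
  | zero => simp
  | add x y _ _ hx hy => rw [map_add]; exact add_mem (hx d) (hy d)
  | smul r x _ hx =>
    rw [smul_eq_mul]
    have hr : r * x = ∑ i ∈ Finset.range (r.totalDegree + 1),
        homogeneousComponent i r * x := by
      rw [← Finset.sum_mul, sum_homogeneousComponent]
    rw [hr, map_sum]
    refine Submodule.sum_mem _ fun i _ => ?_
    rw [comp_homog_mul (homogeneousComponent_isHomogeneous i r)]
    split_ifs
    · exact Ideal.mul_mem_left _ _ (hx _)
    · exact zero_mem _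

instance homogFD (d : ℕ) : FiniteDimensional k ↥(homogeneousSubmodule (Fin n) k d) :=
  Submodule.finiteDimensional_of_le (S₂ := restrictTotalDegree (Fin n) k d)
    (fun p hp => by
      rw [mem_restrictTotalDegree]
      exact ((mem_homogeneousSubmodule _ _).1 hp).totalDegree_le)

/-- The degree-`d` part of an ideal, as a `k`-submodule. -/
noncomputable def part (I : Ideal R) (d : ℕ) : Submodule k R :=
  I.restrictScalars k ⊓ homogeneousSubmodule (Fin n) k d

instance partFD (I : Ideal R) (d : ℕ) : FiniteDimensional k ↥(part I d) :=
  Submodule.finiteDimensional_of_le (inf_le_right)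

variable {I : Ideal (MvPolynomial (Fin n) k)} {b : MvPolynomial (Fin n) k} {e : ℕ}

lemma mem_part {I : Ideal R} {d : ℕ} {x : R} :
    x ∈ part I d ↔ x ∈ I ∧ x ∈ homogeneousSubmodule (Fin n) k d := Iff.rfl

lemma step_sup_eq (hIhom : ∀ x ∈ I, ∀ d, homogeneousComponent d x ∈ I)
    (hb : b.IsHomogeneous e) {d : ℕ} (hed : e ≤ d) :
    part I d ⊔ (homogeneousSubmodule (Fin n) k (d - e)).map (LinearMap.mulLeft k b)
      = part (I ⊔ Ideal.span {b}) d := by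
  apply le_antisymm
  · refine sup_le (fun z hz => ⟨Ideal.mem_sup_left hz.1, hz.2⟩) ?_
    rintro _ ⟨x, hx, rfl⟩
    refine ⟨Ideal.mem_sup_right (Ideal.mem_span_singleton'.2 ⟨x, mul_comm x b⟩), ?_⟩
    have := hb.mul ((mem_homogeneousSubmodule _ _).1 hx)
    rw [show e + (d - e) = d by omega] at this
    exact (mem_homogeneousSubmodule _ _).2 this
  · rintro z ⟨hzI, hzA⟩
    obtain ⟨u, hu, w, hw, rfl⟩ := Submodule.mem_sup.1 hzI
    obtain ⟨v, rfl⟩ := Ideal.mem_span_singleton'.1 hw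
    have hcomp : homogeneousComponent d (u + v * b) = u + v * b :=
      by rw [homogeneousComponent_of_mem hzA, if_pos rfl]
    rw [← hcomp, map_add, mul_comm v b, comp_homog_mul hb, if_pos hed]
    exact Submodule.add_mem_sup ⟨hIhom u hu d, homogeneousComponent_mem d u⟩
      ⟨homogeneousComponent (d - e) v, homogeneousComponent_mem _ v, rfl⟩

lemma step_inf_eq (hb : b.IsHomogeneous e) (hreg : ∀ x, b * x ∈ I → x ∈ I) {d : ℕ} (hed : e ≤ d) :
    part I d ⊓ (homogeneousSubmodule (Fin n) k (d - e)).map (LinearMap.mulLeft k b)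
      = (part I (d - e)).map (LinearMap.mulLeft k b) := by
  apply le_antisymm
  · rintro z ⟨⟨hzI, -⟩, x, hx, rfl⟩
    exact ⟨x, ⟨hreg x hzI, hx⟩, rfl⟩
  · rintro _ ⟨x, ⟨hxI, hxA⟩, rfl⟩
    have hA : b * x ∈ homogeneousSubmodule (Fin n) k d := by
      have := hb.mul ((mem_homogeneousSubmodule _ _).1 hxA)
      rw [show e + (d - e) = d by omega] at this
      exact (mem_homogeneousSubmodule _ _).2 this
    exact ⟨⟨Ideal.mul_mem_left _ _ hxI, hA⟩, ⟨x, hxA, rfl⟩⟩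

lemma mulLeft_injective (hbne : b ≠ 0) :
    Function.Injective (LinearMap.mulLeft k b : R →ₗ[k] R) :=
  fun x y h => mul_left_cancel₀ hbne h

lemma step_finrank (hIhom : ∀ x ∈ I, ∀ d, homogeneousComponent d x ∈ I)
    (hb : b.IsHomogeneous e) (hbne : b ≠ 0)
    (hreg : ∀ x, b * x ∈ I → x ∈ I) {d : ℕ} (hed : e ≤ d) :
    finrank k (part (I ⊔ Ideal.span {b}) d) + finrank k (part I (d - e))
      = finrank k (part I d) + finrank k (homogeneousSubmodule (Fin n) k (d - e)) := by
  set Q := (homogeneousSubmodule (Fin n) k (d - e)).map (LinearMap.mulLeft k b) with hQ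
  haveI : FiniteDimensional k Q :=
    LinearEquiv.finiteDimensional
      (Submodule.equivMapOfInjective _ (mulLeft_injective hbne) _)
  have h1 := Submodule.finrank_sup_add_finrank_inf_eq (part I d) Q
  rw [step_sup_eq hIhom hb hed, step_inf_eq hb hreg hed] at h1
  have e1 := (LinearEquiv.finrank_eq (Submodule.equivMapOfInjective _
    (mulLeft_injective hbne) (part I (d - e)))).symm
  have e2 := (LinearEquiv.finrank_eq (Submodule.equivMapOfInjective _
    (mulLeft_injective hbne) (homogeneousSubmodule (Fin n) k (d - e)))).symm
  rw [e1, hQ, e2] at h1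
  exact h1

lemma step_part_eq_of_lt (hIhom : ∀ x ∈ I, ∀ d, homogeneousComponent d x ∈ I)
    (hb : b.IsHomogeneous e) {d : ℕ} (hed : d < e) :
    part (I ⊔ Ideal.span {b}) d = part I d := by
  apply le_antisymm
  · rintro z ⟨hzI, hzA⟩
    obtain ⟨u, hu, w, hw, rfl⟩ := Submodule.mem_sup.1 hzI
    obtain ⟨v, rfl⟩ := Ideal.mem_span_singleton'.1 hw
    have hcomp : homogeneousComponent d (u + v * b) = u + v * b :=
      by rw [homogeneousComponent_of_mem hzA, if_pos rfl]
    refine ⟨?_, hzA⟩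
    rw [← hcomp, map_add, mul_comm v b, comp_homog_mul hb, if_neg (by omega), add_zero]
    exact hIhom u hu d
  · exact fun z hz => ⟨Ideal.mem_sup_left hz.1, hz.2⟩

/-- Hilbert series of the quotient by `I` (as far as images of homogeneous parts go). -/
noncomputable def HS (I : Ideal R) : PowerSeries ℤ :=
  PowerSeries.mk fun d =>
    (finrank k (homogeneousSubmodule (Fin n) k d) : ℤ) - finrank k (part I d)

lemma step_HS (hIhom : ∀ x ∈ I, ∀ d, homogeneousComponent d x ∈ I)
    (hb : b.IsHomogeneous e) (hbne : b ≠ 0)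
    (hreg : ∀ x, b * x ∈ I → x ∈ I) :
    HS (I ⊔ Ideal.span {b}) = (1 - PowerSeries.X ^ e) * HS I := by
  ext d
  rw [sub_mul, one_mul, map_sub, mul_comm, PowerSeries.coeff_mul_X_pow']
  simp only [HS, PowerSeries.coeff_mk]
  split_ifs with h
  · have hk := step_finrank hIhom hb hbne hreg h
    push_cast
    omega
  · rw [step_part_eq_of_lt hIhom hb (by omega)]
    ring

lemma chain_HS {m : ℕ} (c : Fin m → R) (ee : Fin m → ℕ)
    (hhom : ∀ i, (c i).IsHomogeneous (ee i))
    (hreg : ∀ (j : Fin m) (x : R), c j * x ∈ Ideal.span (c '' {i | i.val < j.val}) →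
      x ∈ Ideal.span (c '' {i | i.val < j.val}))
    (hprop : Ideal.span (Set.range c) ≠ ⊤) :
    HS (Ideal.span (Set.range c))
      = (∏ i : Fin m, (1 - (PowerSeries.X : PowerSeries ℤ) ^ (ee i))) * HS (⊥ : Ideal R) := by
  have key : ∀ t, t ≤ m → HS (Ideal.span (c '' {i | i.val < t}))
      = (∏ i ∈ Finset.univ.filter (fun i : Fin m => i.val < t),
          (1 - (PowerSeries.X : PowerSeries ℤ) ^ (ee i))) * HS (⊥ : Ideal R) := by
    intro t
    induction t with
    | zero =>
      intro _
      have : {i : Fin m | i.val < 0} = ∅ := by ext i; simp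
      simp [this]
    | succ t ih =>
      intro ht
      have htm : t < m := ht
      set j : Fin m := ⟨t, htm⟩ with hj
      have hset : c '' {i | i.val < t + 1} = insert (c j) (c '' {i | i.val < t}) := by
        have hidx : {i : Fin m | i.val < t + 1} = insert j {i : Fin m | i.val < t} := by
          ext i
          simp only [Set.mem_setOf_eq, Set.mem_insert_iff, Fin.ext_iff, hj, Fin.val_mk]
          omega
        rw [hidx, Set.image_insert_eq]
      set I := Ideal.span (c '' {i : Fin m | i.val < t}) with hI
      have hIhom : ∀ x ∈ I, ∀ d, homogeneousComponent d x ∈ I :=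
        fun x hx d => comp_mem_span
          (fun s hs => by obtain ⟨i, -, rfl⟩ := hs; exact ⟨ee i, hhom i⟩) hx d
      have hregj : ∀ x : R, c j * x ∈ I → x ∈ I := hreg j
      have hIne : I ≠ ⊤ := fun hIeq => hprop (eq_top_iff.2 (hIeq ▸
        Ideal.span_mono (Set.image_subset_range _ _)))
      have hbne : c j ≠ 0 := by
        intro h0
        apply hIne
        rw [eq_top_iff]
        intro x _
        exact hregj x (by rw [h0, zero_mul]; exact zero_mem _)
      have hstep := step_HS hIhom (hhom j) hbne hregj
      have hfilter : Finset.univ.filter (fun i : Fin m => i.val < t + 1)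
          = insert j (Finset.univ.filter (fun i : Fin m => i.val < t)) := by
        ext i
        simp only [Finset.mem_filter, Finset.mem_insert, Finset.mem_univ, true_and,
          Fin.ext_iff, hj, Fin.val_mk]
        omega
      rw [hset, Ideal.span_insert, sup_comm, ← hI, hstep, ih (by omega), hfilter,
        Finset.prod_insert (by simp [hj]), mul_assoc]
  have huniv : c '' {i : Fin m | i.val < m} = Set.range c := by
    rw [show {i : Fin m | i.val < m} = Set.univ from by ext i; simp [i.isLt], Set.image_univ]
  have := key m le_rfl
  rw [huniv] at this
  rw [this]
  congr 1
  congr 1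
  ext i
  simp [i.isLt]

lemma homog0_eq_C {p : R} (hp : p ∈ homogeneousSubmodule (Fin n) k 0) :
    p = C (coeff 0 p) := by
  have htd : p.totalDegree = 0 :=
    (totalDegree_zero_iff_isHomogeneous _).2 ((mem_homogeneousSubmodule _ _).1 hp)
  rw [totalDegree_eq_zero_iff] at htd
  ext m
  rcases eq_or_ne m 0 with rfl | hm
  · simp
  · rw [coeff_C, if_neg (Ne.symm hm)]
    by_contra hc
    exact hm (Finsupp.ext fun i => htd m (MvPolynomial.mem_support_iff.2 hc) i)

lemma homogSucc_le_spanX (d : ℕ) :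
    homogeneousSubmodule (Fin n) k (d + 1) ≤
      (Ideal.span (Set.range (X : Fin n → R))).restrictScalars k := by
  intro p hp
  have hph := (mem_homogeneousSubmodule _ _).1 hp
  rw [Submodule.restrictScalars_mem, ← Set.image_univ, mem_ideal_span_X_image]
  intro m hm
  by_contra hc
  push_neg at hc
  have hm0 : m = 0 := Finsupp.ext fun i => hc i (Set.mem_univ i)
  have := hph (MvPolynomial.mem_support_iff.1 (hm0 ▸ hm))
  simp at this

lemma part_spanX_zero :
    part (Ideal.span (Set.range (X : Fin n → R))) 0 = ⊥ := by
  rw [eq_bot_iff]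
  rintro p ⟨hpI, hpA⟩
  have hpa := homog0_eq_C hpA
  have hpI' : p ∈ Ideal.span (Set.range (X : Fin n → R)) := hpI
  rw [← Set.image_univ, mem_ideal_span_X_image] at hpI'
  rename' hpI' => hpI
  rcases eq_or_ne (coeff 0 p) 0 with h0 | h0
  · rw [Submodule.mem_bot, hpa, h0, map_zero]
  · obtain ⟨i, -, hi⟩ := hpI 0 (MvPolynomial.mem_support_iff.2 h0)
    exact absurd rfl hi

lemma finrank_homog0 : finrank k ↥(homogeneousSubmodule (Fin n) k 0) = 1 := by
  have heq : homogeneousSubmodule (Fin n) k 0 = Submodule.span k {(1 : R)} := by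
    apply le_antisymm
    · intro p hp
      rw [Submodule.mem_span_singleton]
      exact ⟨coeff 0 p, by rw [smul_eq_C_mul, mul_one]; exact (homog0_eq_C hp).symm⟩
    · rw [Submodule.span_le, Set.singleton_subset_iff]
      exact (mem_homogeneousSubmodule _ _).2 (isHomogeneous_one _ _)
  rw [heq, finrank_span_singleton (one_ne_zero)]

lemma spanX_ne_top : Ideal.span (Set.range (X : Fin n → R)) ≠ ⊤ := by
  intro h
  have h1 : (1 : R) ∈ Ideal.span (Set.range (X : Fin n → R)) := h ▸ Submodule.mem_top
  rw [← Set.image_univ, mem_ideal_span_X_image] at h1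
  obtain ⟨i, -, hi⟩ := h1 0 (MvPolynomial.mem_support_iff.2 (by simp))
  exact absurd rfl hi

lemma spanX_chain_reg (j : Fin n) (x : R)
    (hx : X j * x ∈ Ideal.span ((X : Fin n → R) '' {i | i.val < j.val})) :
    x ∈ Ideal.span ((X : Fin n → R) '' {i | i.val < j.val}) := by
  rw [mem_ideal_span_X_image] at hx ⊢
  intro m hm
  have hmem : (Finsupp.single j 1 + m) ∈ (X j * x).support := by
    rw [MvPolynomial.mem_support_iff, coeff_X_mul]
    exact MvPolynomial.mem_support_iff.1 hm
  obtain ⟨i, hij, hi⟩ := hx _ hmem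
  refine ⟨i, hij, ?_⟩
  have hne : i ≠ j := fun h => by simp [h] at hij
  simpa [Finsupp.add_apply, Finsupp.single_apply, (Ne.symm hne)] using hi

lemma HS_spanX_eq :
    HS (Ideal.span (Set.range (X : Fin n → R)))
      = (1 - PowerSeries.X : PowerSeries ℤ) ^ n * HS (⊥ : Ideal R) := by
  have := chain_HS (X : Fin n → R) (fun _ => 1) (fun i => isHomogeneous_X _ _)
    (fun j x hx => spanX_chain_reg j x hx) spanX_ne_top
  rw [this]
  congr 1
  simp [Finset.prod_const]

lemma HS_spanX_one : HS (Ideal.span (Set.range (X : Fin n → R))) = 1 := by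
  ext d
  simp only [HS, PowerSeries.coeff_mk, PowerSeries.coeff_one]
  cases d with
  | zero =>
    rw [part_spanX_zero, finrank_homog0]
    simp
  | succ d =>
    have hpart : part (Ideal.span (Set.range (X : Fin n → R))) (d + 1)
        = homogeneousSubmodule (Fin n) k (d + 1) :=
      inf_eq_right.2 (homogSucc_le_spanX d)
    rw [hpart]
    simp

lemma HS_bot_mul :
    (1 - PowerSeries.X : PowerSeries ℤ) ^ n * HS (⊥ : Ideal R) = 1 := by
  rw [← HS_spanX_eq (k := k), HS_spanX_one]

lemma HS_eq_geom_prod (c : Fin n → R) (ee : Fin n → ℕ)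
    (hhom : ∀ i, (c i).IsHomogeneous (ee i))
    (hreg : ∀ (j : Fin n) (x : R), c j * x ∈ Ideal.span (c '' {i | i.val < j.val}) →
      x ∈ Ideal.span (c '' {i | i.val < j.val}))
    (hprop : Ideal.span (Set.range c) ≠ ⊤) :
    HS (Ideal.span (Set.range c))
      = ∏ i : Fin n, ∑ j ∈ Finset.range (ee i), (PowerSeries.X : PowerSeries ℤ) ^ j := by
  have h1 := chain_HS c ee hhom hreg hprop
  have hgeom : ∀ e : ℕ, (1 - (PowerSeries.X : PowerSeries ℤ) ^ e)
      = (1 - PowerSeries.X) * ∑ j ∈ Finset.range e, PowerSeries.X ^ j := by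
    intro e
    have h := geom_sum_mul (PowerSeries.X : PowerSeries ℤ) e
    linear_combination h
  have h2 : (∏ i : Fin n, (1 - (PowerSeries.X : PowerSeries ℤ) ^ (ee i)))
      = (1 - PowerSeries.X : PowerSeries ℤ) ^ n
        * ∏ i : Fin n, ∑ j ∈ Finset.range (ee i), (PowerSeries.X : PowerSeries ℤ) ^ j := by
    calc (∏ i : Fin n, (1 - (PowerSeries.X : PowerSeries ℤ) ^ (ee i)))
        = ∏ i : Fin n, ((1 - PowerSeries.X)
            * ∑ j ∈ Finset.range (ee i), (PowerSeries.X : PowerSeries ℤ) ^ j) := by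
          exact Finset.prod_congr rfl fun i _ => hgeom (ee i)
      _ = _ := by
          rw [Finset.prod_mul_distrib, Finset.prod_const, Finset.card_univ, Fintype.card_fin]
  rw [h1, h2, mul_comm ((1 - PowerSeries.X : PowerSeries ℤ) ^ n), mul_assoc,
    HS_bot_mul, mul_one]

lemma coeff_geom_prod_eq_zero (ee : Fin n → ℕ) {d : ℕ} (hd : (∑ i, (ee i - 1)) < d) :
    PowerSeries.coeff d
      (∏ i : Fin n, ∑ j ∈ Finset.range (ee i), (PowerSeries.X : PowerSeries ℤ) ^ j) = 0 := by
  set P : Polynomial ℤ := ∏ i : Fin n, ∑ j ∈ Finset.range (ee i), Polynomial.X ^ j with hP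
  have hcast : ((P : Polynomial ℤ) : PowerSeries ℤ)
      = ∏ i : Fin n, ∑ j ∈ Finset.range (ee i), (PowerSeries.X : PowerSeries ℤ) ^ j := by
    rw [hP, ← Polynomial.coeToPowerSeries.ringHom_apply, map_prod]
    refine Finset.prod_congr rfl fun i _ => ?_
    rw [map_sum]
    refine Finset.sum_congr rfl fun j _ => ?_
    rw [map_pow, Polynomial.coeToPowerSeries.ringHom_apply, Polynomial.coe_X]
  have hdeg : P.natDegree ≤ ∑ i, (ee i - 1) := by
    refine le_trans (Polynomial.natDegree_prod_le _ _) (Finset.sum_le_sum fun i _ => ?_)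
    refine Polynomial.natDegree_sum_le_of_forall_le _ _ fun j hj => ?_
    rw [Polynomial.natDegree_X_pow]
    have := Finset.mem_range.1 hj
    omega
  rw [← hcast, Polynomial.coeff_coe]
  exact Polynomial.coeff_eq_zero_of_natDegree_lt (lt_of_le_of_lt hdeg hd)

lemma homog_le_of_coeff_zero (I : Ideal R) {d : ℕ}
    (h : PowerSeries.coeff d (HS I) = 0) :
    homogeneousSubmodule (Fin n) k d ≤ I.restrictScalars k := by
  simp only [HS, PowerSeries.coeff_mk] at h
  have heq : part I d = homogeneousSubmodule (Fin n) k d :=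
    Submodule.eq_of_le_of_finrank_eq inf_le_right (by omega)
  exact le_trans (le_of_eq heq.symm) inf_le_left

lemma finiteDimensional_of_parts (I : Ideal R) (B : ℕ)
    (h : ∀ d, B ≤ d → homogeneousSubmodule (Fin n) k d ≤ I.restrictScalars k) :
    FiniteDimensional k (R ⧸ I) := by
  set S : Submodule k R :=
    (Finset.range B).sup (fun d => homogeneousSubmodule (Fin n) k d) with hS
  haveI : FiniteDimensional k S := Submodule.finiteDimensional_finset_sup _ _
  let φ : R →ₗ[k] R ⧸ I := (Ideal.Quotient.mkₐ k I).toLinearMap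
  have hsurj : Function.Surjective (φ.comp S.subtype) := by
    rw [← LinearMap.range_eq_top, LinearMap.range_comp, Submodule.range_subtype, eq_top_iff]
    intro z _
    obtain ⟨p, rfl⟩ := Ideal.Quotient.mk_surjective (I := I) z
    have hp : (Ideal.Quotient.mk I) p
        = ∑ i ∈ Finset.range (p.totalDegree + 1), φ (homogeneousComponent i p) := by
      show φ p = _
      rw [← map_sum]
      congr 1
      exact (sum_homogeneousComponent p).symm
    rw [hp]
    refine Submodule.sum_mem _ fun i _ => ?_
    by_cases hiB : i < B
    · have hle : homogeneousSubmodule (Fin n) k i ≤ S :=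
        Finset.le_sup (Finset.mem_range.2 hiB)
      exact Submodule.mem_map_of_mem (hle (homogeneousComponent_mem i p))
    · have hmem : homogeneousComponent i p ∈ I :=
        h i (by omega) (homogeneousComponent_mem i p)
      have hz : φ (homogeneousComponent i p) = 0 :=
        Ideal.Quotient.eq_zero_iff_mem.2 hmem
      rw [hz]
      exact zero_mem _
  exact Module.Finite.of_surjective (φ.comp S.subtype) hsurj

theorem main (b : Fin n → R) (deg : Fin n → ℕ) (hdeg : ∀ i, 0 < deg i)
    (hhom : ∀ i, (b i).IsHomogeneous (deg i))
    (hreg : RingTheory.Sequence.IsRegular R (List.ofFn b)) :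
    FiniteDimensional k (R ⧸ Ideal.span (Set.range b)) := by
  have hset : ∀ j : Fin n, {r | r ∈ (List.ofFn b).take j.val}
      = b '' {i : Fin n | i.val < j.val} := by
    intro j
    ext x
    simp only [Set.mem_setOf_eq, List.mem_take_iff_getElem, List.length_ofFn, Set.mem_image]
    constructor
    · rintro ⟨i, hi, rfl⟩
      simp only [lt_inf_iff] at hi
      exact ⟨⟨i, hi.2⟩, hi.1, (List.getElem_ofFn (by simpa using hi.2 : i < (List.ofFn b).length)).symm⟩
    · rintro ⟨i, hij, rfl⟩
      refine ⟨i.val, ?_, ?_⟩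
      · simp only [lt_inf_iff]
        exact ⟨hij, i.isLt⟩
      · rw [List.getElem_ofFn]
  have hofList : Ideal.ofList (List.ofFn b) = Ideal.span (Set.range b) := by
    show Ideal.span _ = _
    congr 1
    ext x
    exact List.mem_ofFn
  have hprop : Ideal.span (Set.range b) ≠ ⊤ := by
    intro h
    apply hreg.top_ne_smul
    rw [smul_eq_mul, Ideal.mul_top, hofList, h]
  have hchain : ∀ (j : Fin n) (x : R),
      b j * x ∈ Ideal.span (b '' {i : Fin n | i.val < j.val}) →
        x ∈ Ideal.span (b '' {i : Fin n | i.val < j.val}) := by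
    intro j x hx
    have hw := hreg.toIsWeaklyRegular.regular_mod_prev j.val (by simpa using j.isLt)
    have hge : (List.ofFn b)[j.val]'(by simpa using j.isLt) = b j := by
      rw [List.getElem_ofFn]
    rw [hge] at hw
    have hIeq : (Ideal.ofList ((List.ofFn b).take j.val) • (⊤ : Submodule R R))
        = (Ideal.span (b '' {i : Fin n | i.val < j.val})).restrictScalars R := by
      rw [smul_eq_mul, Ideal.mul_top]
      show Ideal.span _ = _
      rw [hset j]
      rfl
    have h0 : (b j) • (Submodule.Quotient.mk x :
          R ⧸ (Ideal.ofList ((List.ofFn b).take j.val) • (⊤ : Submodule R R)))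
        = (b j) • (Submodule.Quotient.mk 0) := by
      rw [← Submodule.Quotient.mk_smul, ← Submodule.Quotient.mk_smul]
      apply (Submodule.Quotient.eq _).2
      rw [hIeq]
      simpa using hx
    have h2 := hw h0
    have h3 := (Submodule.Quotient.eq _).1 h2
    rw [hIeq] at h3
    simpa using h3
  have hHS := HS_eq_geom_prod b deg hhom hchain hprop
  apply finiteDimensional_of_parts _ ((∑ i, (deg i - 1)) + 1)
  intro d hd
  apply homog_le_of_coeff_zero
  rw [hHS]
  exact coeff_geom_prod_eq_zero deg (by omega)

end RegSeqAux

/-- If `b_1,...,b_n` is a regular sequence of homogeneous polynomials of positive degree in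
`k[t_1,...,t_n]` (as many elements as variables), then `k[t_1,...,t_n]/(b_1,...,b_n)` is a
finite-dimensional `k`-vector space. -/
theorem quotient_by_regular_homogeneous_finiteDimensional
    (k : Type*) [Field k] (n : ℕ) (b : Fin n → MvPolynomial (Fin n) k)
    (deg : Fin n → ℕ) (hdeg : ∀ i, 0 < deg i)
    (hhom : ∀ i, (b i).IsHomogeneous (deg i))
    (hreg : RingTheory.Sequence.IsRegular (MvPolynomial (Fin n) k) (List.ofFn b)) :
    FiniteDimensional k (MvPolynomial (Fin n) k ⧸ Ideal.span (Set.range b)) :=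
  RegSeqAux.main b deg hdeg hhom hreg
end
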